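/- arXiv:2602.13077 — 7 statements merged into one kernel-verified Lean document; each statement's English description precedes it below -/
import Mathlib

section
/- If M is a full set of successor type, then there is a transitive set X ∈ M that is a maximal cardinality of M. -/
namespace NairianModels

open ZFSet

/-! ## Basic cardinality notions -/

/-- `f` codes a surjection from `X` onto `Y`: a set of Kuratowski ordered pairs that is a
function with domain `X` and values in `Y`, every element of `Y` being a value. -/
def ZFSurj (X Y f : ZFSet) : Prop :=
  ZFSet.IsFunc X Y f ∧ ∀ y ∈ Y, ∃ x ∈ X, ZFSet.pair x y ∈ f

/-- `|X| ≲ |Y|`: either `X = ∅` or there is a surjection from `Y` onto `X`. -/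
def CardLE (X Y : ZFSet) : Prop :=
  X = ∅ ∨ ∃ f, ZFSurj Y X f

/-- `|X| ≈ |Y|`. -/
def CardEq (X Y : ZFSet) : Prop :=
  CardLE X Y ∧ CardLE Y X

/-- `X` is a maximal cardinality of `M`: `X ∈ M` and every nonempty `Y ∈ M` is the image of a
surjection from `X` that belongs to `M`. -/
def IsMaxCard (X M : ZFSet) : Prop :=
  X ∈ M ∧ ∀ Y ∈ M, Y = ∅ ∨ ∃ f ∈ M, ZFSurj X Y f

/-- `M` is of successor type: it has a maximal cardinality. -/
def SuccType (M : ZFSet) : Prop :=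
  ∃ X, IsMaxCard X M

/-! ## Fullness -/

def TransClosed (M : ZFSet) : Prop :=
  ∀ Y ∈ M, ∃ Z ∈ M, Z.IsTransitive ∧ Z ⊆ M ∧ Y ∈ Z

def ProdClosed (M : ZFSet) : Prop :=
  ∀ X ∈ M, ∀ Y ∈ M, ZFSet.prod X Y ∈ M

def SubsetClosed (M : ZFSet) : Prop :=
  ∀ X ∈ M, ZFSet.powerset X ⊆ M

def Full (M : ZFSet) : Prop :=
  TransClosed M ∧ ProdClosed M ∧ SubsetClosed M

/-! ## Ordinals, strong regularity, hierarchicality, H-likeness -/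

/-- von Neumann ordinal: a transitive set linearly ordered by `∈`. -/
def IsOrd (x : ZFSet) : Prop :=
  x.IsTransitive ∧
    (∀ y ∈ x, ∀ z ∈ x, y ∈ z ∨ y = z ∨ z ∈ y) ∧
    (∀ a ∈ x, ∀ b ∈ x, ∀ c ∈ x, a ∈ b → b ∈ c → a ∈ c)

/-- limit (von Neumann) ordinal: a nonempty ordinal with no largest element. -/
def IsLimitOrd (x : ZFSet) : Prop :=
  IsOrd x ∧ x ≠ ∅ ∧ ∀ y ∈ x, ∃ z ∈ x, y ∈ z

/-- `M` is strongly regular: any (set-coded) function from an `X ∈ M` to the ordinals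
belonging to `M` is bounded by an ordinal in `M`. -/
def StronglyRegular (M : ZFSet) : Prop :=
  ∀ X ∈ M, ∀ f : ZFSet,
    (∀ p ∈ f, ∃ x ∈ X, ∃ o, IsOrd o ∧ o ∈ M ∧ p = ZFSet.pair x o) →
    (∀ x ∈ X, ∃ o, ZFSet.pair x o ∈ f) →
    (∀ x ∈ X, ∀ o o', ZFSet.pair x o ∈ f → ZFSet.pair x o' ∈ f → o = o') →
    ∃ β, IsOrd β ∧ β ∈ M ∧ ∀ x ∈ X, ∀ o, ZFSet.pair x o ∈ f → o ∈ β

/-- `M` is hierarchical: it is the continuous increasing union, along the ordinals belonging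
to `M`, of transitive sets belonging to `M`. -/
def Hierarchical (M : ZFSet) : Prop :=
  ∃ F : ZFSet → ZFSet,
    (∀ α, IsOrd α → α ∈ M → (F α).IsTransitive ∧ F α ∈ M) ∧
    (∀ α β, IsOrd α → IsOrd β → α ∈ M → β ∈ M → α ∈ β → F α ⊆ F β) ∧
    (∀ β, IsLimitOrd β → β ∈ M → ∀ x, x ∈ F β ↔ ∃ α ∈ β, x ∈ F α) ∧
    (∀ x, x ∈ M ↔ ∃ α, IsOrd α ∧ α ∈ M ∧ x ∈ F α)

/-- `M` is H-like: transitive, full, hierarchical, and strongly regular in case it is of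
successor type. -/
def HLike (M : ZFSet) : Prop :=
  M.IsTransitive ∧ Full M ∧ Hierarchical M ∧ (SuccType M → StronglyRegular M)

/-! ## Transitive closure and the classes `H_X` -/

/-- Iterated unions: `iterUnion x n = ⋃ⁿ x`. -/
def iterUnion (x : ZFSet) : ℕ → ZFSet
  | 0 => x
  | n + 1 => ZFSet.sUnion (iterUnion x n)

/-- The transitive closure of `x` (the least transitive set including `x`):
`x ∪ ⋃x ∪ ⋃⋃x ∪ ⋯`. -/
noncomputable def transCl (x : ZFSet) : ZFSet :=
  ZFSet.sUnion (ZFSet.range fun n : ℕ => iterUnion x n)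

/-- `Y ∈ H_X`: there is a surjection from `X` onto the transitive closure of `{Y}`. -/
def MemH (X Y : ZFSet) : Prop :=
  ∃ f, ZFSurj X (transCl ({Y} : ZFSet)) f

/-! ## First-order logic over `(W, ∈)` -/

/-- Formulas of the language of set theory, with variables indexed by `ℕ`. -/
inductive Fml : Type
  | mem : ℕ → ℕ → Fml
  | equal : ℕ → ℕ → Fml
  | not : Fml → Fml
  | and : Fml → Fml → Fml
  | ex : ℕ → Fml → Fml

/-- Satisfaction of a formula in the structure `(D, ∈)` under the assignment `v`. -/
def Sat (D : ZFSet) : Fml → (ℕ → ZFSet) → Prop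
  | .mem i j, v => v i ∈ v j
  | .equal i j, v => v i = v j
  | .not φ, v => ¬ Sat D φ v
  | .and φ ψ, v => Sat D φ v ∧ Sat D ψ v
  | .ex n φ, v => ∃ a, a ∈ D ∧ Sat D φ (Function.update v n a)

/-- `(X, ∈)` is an elementary substructure of `(W, ∈)`. -/
def ElemSub (X W : ZFSet) : Prop :=
  X ⊆ W ∧ ∀ (φ : Fml) (v : ℕ → ZFSet), (∀ n, v n ∈ X) → (Sat X φ v ↔ Sat W φ v)

/-- `π` is an elementary embedding of `(M, ∈)` into `(W, ∈)`. -/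
def IsElemEmb (M W : ZFSet) (π : ZFSet → ZFSet) : Prop :=
  (∀ x ∈ M, π x ∈ W) ∧
    ∀ (φ : Fml) (v : ℕ → ZFSet), (∀ n, v n ∈ M) →
      (Sat M φ v ↔ Sat W φ fun n => π (v n))

/-- `M` is `X`-closed: `X ∪ {X} ⊆ M` and every (set-coded) function from `X` into `M`
belongs to `M`. -/
def XClosed (X M : ZFSet) : Prop :=
  X ⊆ M ∧ X ∈ M ∧ ∀ f, ZFSet.IsFunc X M f → f ∈ M

/-- `M` is definably closed: any subset of a transitive `N ∈ M` definable over `(N, ∈)` with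
parameters in `N` belongs to `M`. -/
def DefClosed (M : ZFSet) : Prop :=
  ∀ N, N ∈ M → N.IsTransitive →
    ∀ (φ : Fml) (v : ℕ → ZFSet), (∀ n, v n ∈ N) →
      ∀ A : ZFSet, (∀ y, y ∈ A ↔ y ∈ N ∧ Sat N φ (Function.update v 0 y)) → A ∈ M

/-- The reflection principle `ref(X, Y, Z)`. -/
def Ref (X Y Z : ZFSet) : Prop :=
  ∀ W a : ZFSet, W.IsTransitive → XClosed X W → Y ∈ W → a ∈ W →
    ∃ (M : ZFSet) (π : ZFSet → ZFSet),
      M.IsTransitive ∧ IsElemEmb M W π ∧ ({X, Y} : ZFSet) ∈ M ∧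
      (∃ x ∈ M, π x = a) ∧ M ∈ Z ∧
      (∀ z, z ∈ X ∨ z ∈ Y ∨ z = X ∨ z = Y → π z = z) ∧ XClosed X M

/-! ## The N-hierarchy -/

/-- Hereditarily finite sets. -/
def HFin : ZFSet → Prop :=
  ZFSet.mem_wf.fix (C := fun _ => Prop) fun x IH =>
    x.toSet.Finite ∧ ∀ y, ∀ h : y ∈ x, IH y h

/-- `F` is the N-hierarchy: `F 0` is the set of hereditarily finite sets, `F 1 = H_{F 0}`,
`F (α+2) = H_{F (α+1)}`, and for limit `α`, `F α = ⋃_{β<α} F β` and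
`F (α+1) = H_{𝒫(F α)}`. -/
def IsNHierarchy (F : Ordinal → ZFSet) : Prop :=
  (∀ Y, Y ∈ F 0 ↔ HFin Y) ∧
  (∀ Y, Y ∈ F 1 ↔ MemH (F 0) Y) ∧
  (∀ α : Ordinal, ∀ Y, Y ∈ F (α + 2) ↔ MemH (F (α + 1)) Y) ∧
  (∀ α : Ordinal, Order.IsSuccLimit α →
    (∀ Y, Y ∈ F α ↔ ∃ β < α, Y ∈ F β) ∧
    (∀ Y, Y ∈ F (α + 1) ↔ MemH (ZFSet.powerset (F α)) Y))

/-! ## Auxiliary product constructions -/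

/-- Left-nested cartesian product `Y 0 × Y 1 × ⋯ × Y n`. -/
def nestedProd (Y : ℕ → ZFSet) : ℕ → ZFSet
  | 0 => Y 0
  | n + 1 => ZFSet.prod (nestedProd Y n) (Y (n + 1))

/-- Left-nested cartesian power `X^n` (with junk value `∅` at `n = 0`). -/
def nPow (X : ZFSet) : ℕ → ZFSet
  | 0 => ∅
  | 1 => X
  | n + 2 => ZFSet.prod (nPow X (n + 1)) X

/-- `W` is `<κ`-closed: every function from an ordinal `η < κ` into `W` belongs to `W`. -/
def LtClosed (κ W : ZFSet) : Prop :=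
  ∀ η ∈ κ, ∀ f, ZFSet.IsFunc η W f → f ∈ W

/-! ## Statement 0 -/

theorem stmt0 (M : ZFSet) (hFull : Full M) (hSucc : SuccType M) :
    ∃ X : ZFSet, X.IsTransitive ∧ IsMaxCard X M := by
  obtain ⟨X, hXM, hXmax⟩ := hSucc
  obtain ⟨hTC, hProd, hSub⟩ := hFull
  obtain ⟨Z, hZM, hZtrans, hZsub, hXZ⟩ := hTC X hXM
  have hXsubZ : X ⊆ Z := hZtrans X hXZ
  refine ⟨Z, hZtrans, hZM, fun Y hYM => ?_⟩
  by_cases hYe : Y = ∅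
  · exact Or.inl hYe
  rcases hXmax Y hYM with hY0 | ⟨f, hfM, hfFunc, hfSurj⟩
  · exact absurd hY0 hYe
  right
  obtain ⟨y0, hy0⟩ : ∃ y, y ∈ Y := by
    by_contra h
    push_neg at h
    exact hYe ((ZFSet.eq_empty Y).mpr h)
  set g : ZFSet := ZFSet.sep
      (fun p => p ∈ f ∨ ∃ z, z ∈ Z ∧ z ∉ X ∧ p = ZFSet.pair z y0)
      (ZFSet.prod Z Y) with hg
  have hgsub : g ⊆ ZFSet.prod Z Y := fun p hp => (ZFSet.mem_sep.mp hp).1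
  have hfX : ∀ {a b : ZFSet}, ZFSet.pair a b ∈ f → a ∈ X ∧ b ∈ Y := by
    intro a b hab
    exact ZFSet.pair_mem_prod.mp (hfFunc.1 hab)
  have hmemg : ∀ {a b : ZFSet}, ZFSet.pair a b ∈ g ↔
      (ZFSet.pair a b ∈ f ∨ (a ∈ Z ∧ a ∉ X ∧ b = y0)) := by
    intro a b
    constructor
    · intro h
      rcases (ZFSet.mem_sep.mp h).2 with h1 | ⟨z, hzZ, hzX, hEq⟩
      · exact Or.inl h1
      · obtain ⟨h2, h3⟩ := ZFSet.pair_injective hEq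
        exact Or.inr ⟨h2 ▸ hzZ, h2 ▸ hzX, h3⟩
    · rintro (h1 | ⟨haZ, haX, rfl⟩)
      · have := hfX h1
        exact ZFSet.mem_sep.mpr ⟨ZFSet.pair_mem_prod.mpr ⟨hXsubZ this.1, this.2⟩,
          Or.inl h1⟩
      · exact ZFSet.mem_sep.mpr ⟨ZFSet.pair_mem_prod.mpr ⟨haZ, hy0⟩,
          Or.inr ⟨a, haZ, haX, rfl⟩⟩
  refine ⟨g, ?_, ⟨hgsub, ?_⟩, ?_⟩
  · exact hSub (ZFSet.prod Z Y) (hProd Z hZM Y hYM)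
      (ZFSet.mem_powerset.mpr hgsub)
  · intro z hzZ
    by_cases hzX : z ∈ X
    · obtain ⟨w, hw, huniq⟩ := hfFunc.2 z hzX
      refine ⟨w, hmemg.mpr (Or.inl hw), ?_⟩
      intro w' hw'
      rcases hmemg.mp hw' with h1 | ⟨_, h2, _⟩
      · exact huniq w' h1
      · exact absurd hzX h2
    · refine ⟨y0, hmemg.mpr (Or.inr ⟨hzZ, hzX, rfl⟩), ?_⟩
      intro w' hw'
      rcases hmemg.mp hw' with h1 | ⟨_, _, h3⟩
      · exact absurd (hfX h1).1 hzX
      · exact h3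
  · intro y hy
    obtain ⟨x, hxX, hxy⟩ := hfSurj y hy
    exact ⟨x, hXsubZ hxX, hmemg.mpr (Or.inl hxy)⟩

end NairianModels
end

section
/- Suppose M is a full set. Then: (i) for every n ∈ ω and every sequence Y_0, …, Y_n of elements of M, every subset of the (left-nested) cartesian product Y_0 × ⋯ × Y_n belongs to M; and (ii) if X ∈ M is transitive and a maximal cardinality of M, then |M| ≈ |𝒫(X)|. -/
namespace NairianModels

open ZFSet

/-! ## Auxiliary machinery for `stmt1` -/

attribute [local instance] Classical.propDecidable

noncomputable local instance (priority := 50) zfAllDefinable (n : ℕ)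
    (F : (Fin n → ZFSet) → ZFSet) : ZFSet.Definable n F :=
  Classical.allZFSetDefinable F

lemma zfSurj_map {X Y : ZFSet} (h : ZFSet → ZFSet) (hm : ∀ a ∈ X, h a ∈ Y)
    (hs : ∀ y ∈ Y, ∃ a ∈ X, h a = y) : ZFSurj X Y (ZFSet.map h X) := by
  refine ⟨ZFSet.map_isFunc.2 hm, fun y hy => ?_⟩
  obtain ⟨a, ha, rfl⟩ := hs y hy
  exact ⟨a, ha, ZFSet.mem_map.2 ⟨a, ha, rfl⟩⟩

/-- The value of a set-coded function `f` at `x`. -/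
noncomputable def fval (f x : ZFSet) : ZFSet :=
  ZFSet.sUnion (ZFSet.sep (fun y => ZFSet.pair x y ∈ f) (ZFSet.sUnion (ZFSet.sUnion f)))

lemma fval_eq {f x y : ZFSet} (hxy : ZFSet.pair x y ∈ f)
    (huniq : ∀ y', ZFSet.pair x y' ∈ f → y' = y) : fval f x = y := by
  have hy : y ∈ ZFSet.sUnion (ZFSet.sUnion f) := by
    have h1 : ({x, y} : ZFSet) ∈ ZFSet.sUnion f :=
      ZFSet.mem_sUnion.2 ⟨_, hxy, by simp [ZFSet.pair]⟩
    exact ZFSet.mem_sUnion.2 ⟨_, h1, by simp⟩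
  have hsep : ZFSet.sep (fun y => ZFSet.pair x y ∈ f) (ZFSet.sUnion (ZFSet.sUnion f)) = {y} := by
    ext z
    simp only [ZFSet.mem_sep, ZFSet.mem_singleton]
    exact ⟨fun h => huniq z h.2, fun h => h ▸ ⟨hy, hxy⟩⟩
  rw [fval, hsep, ZFSet.sUnion_singleton]

lemma isFunc_fval {X Y f : ZFSet} (hf : ZFSet.IsFunc X Y f) {x : ZFSet} (hx : x ∈ X) :
    ZFSet.pair x (fval f x) ∈ f ∧ ∀ y, ZFSet.pair x y ∈ f → y = fval f x := by
  obtain ⟨y, hy, hu⟩ := hf.2 x hx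
  have he : fval f x = y := fval_eq hy fun y' h => hu y' h
  rw [he]
  exact ⟨hy, fun y' h => hu y' h⟩

/-- The set of `R`-predecessors of `x`. -/
def predsIn (R x : ZFSet) : ZFSet :=
  ZFSet.sep (fun a => ZFSet.pair a x ∈ R) (ZFSet.sUnion (ZFSet.sUnion R))

lemma mem_predsIn {R x a : ZFSet} : a ∈ predsIn R x ↔ ZFSet.pair a x ∈ R := by
  simp only [predsIn, ZFSet.mem_sep]
  refine ⟨fun h => h.2, fun h => ⟨?_, h⟩⟩
  have h1 : ({a} : ZFSet) ∈ ZFSet.sUnion R := ZFSet.mem_sUnion.2 ⟨_, h, by simp [ZFSet.pair]⟩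
  exact ZFSet.mem_sUnion.2 ⟨_, h1, by simp⟩

/-- Auxiliary relation used to define the collapse of a coded relation. -/
def collRel (R a b : ZFSet) : Prop :=
  ZFSet.pair a b ∈ R ∧ WellFounded (fun a b : ZFSet => ZFSet.pair a b ∈ R)

lemma collRel_wf (R : ZFSet) : WellFounded (collRel R) := by
  by_cases h : WellFounded (fun a b : ZFSet => ZFSet.pair a b ∈ R)
  · exact Subrelation.wf (fun hab => hab.1) h
  · exact ⟨fun a => ⟨a, fun b hb => absurd hb.2 h⟩⟩

/-- The Mostowski-style collapse of the coded relation `R` at `x`. -/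
noncomputable def coll (R x : ZFSet) : ZFSet :=
  (collRel_wf R).fix
    (fun x IH =>
      ZFSet.image (fun a => if ha : collRel R a x then IH a ha else ∅) (predsIn R x)) x

lemma mem_coll {R : ZFSet} (h : WellFounded fun a b : ZFSet => ZFSet.pair a b ∈ R)
    {x y : ZFSet} : y ∈ coll R x ↔ ∃ a, ZFSet.pair a x ∈ R ∧ coll R a = y := by
  have hcoll : coll R x =
      ZFSet.image (fun a => if ha : collRel R a x then coll R a else ∅) (predsIn R x) := by
    rw [coll, WellFounded.fix_eq]
    rfl
  rw [hcoll, ZFSet.mem_image]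
  constructor
  · rintro ⟨a, ha, rfl⟩
    have hR := mem_predsIn.1 ha
    have hc : collRel R a x := ⟨hR, h⟩
    exact ⟨a, hR, by rw [dif_pos hc]⟩
  · rintro ⟨a, hR, rfl⟩
    have hc : collRel R a x := ⟨hR, h⟩
    exact ⟨a, mem_predsIn.2 hR, by rw [dif_pos hc]⟩

/-- The collapse of the membership relation pulled back along a surjection onto a transitive
set computes the values of the surjection. -/
lemma coll_fval {X Z f : ZFSet} (hZtr : Z.IsTransitive)
    (hf : ZFSet.IsFunc X Z f) (hsurj : ∀ z ∈ Z, ∃ a ∈ X, ZFSet.pair a z ∈ f)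
    (R : ZFSet)
    (hR : ∀ q, q ∈ R ↔ ∃ a ∈ X, ∃ b ∈ X, q = ZFSet.pair a b ∧ fval f a ∈ fval f b) :
    ∀ x ∈ X, coll R x = fval f x := by
  have hRpair : ∀ a b : ZFSet,
      ZFSet.pair a b ∈ R ↔ a ∈ X ∧ b ∈ X ∧ fval f a ∈ fval f b := by
    intro a b
    rw [hR]
    constructor
    · rintro ⟨a', ha', b', hb', heq, hmem⟩
      obtain ⟨rfl, rfl⟩ := ZFSet.pair_injective heq
      exact ⟨ha', hb', hmem⟩
    · rintro ⟨ha, hb, hm⟩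
      exact ⟨a, ha, b, hb, rfl, hm⟩
  have hwf : WellFounded (fun a b : ZFSet => ZFSet.pair a b ∈ R) :=
    Subrelation.wf (r := InvImage (· ∈ ·) (fval f))
      (fun hab => ((hRpair _ _).1 hab).2.2) (InvImage.wf _ ZFSet.mem_wf)
  have hfv : ∀ x ∈ X, fval f x ∈ Z := fun x hx =>
    (ZFSet.pair_mem_prod.1 (hf.1 (isFunc_fval hf hx).1)).2
  intro x hx
  refine hwf.induction (C := fun x => x ∈ X → coll R x = fval f x) x ?_ hx
  intro x IH hx
  ext y
  rw [mem_coll hwf]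
  constructor
  · rintro ⟨a, haR, rfl⟩
    obtain ⟨ha, -, hm⟩ := (hRpair a x).1 haR
    rwa [IH a haR ha]
  · intro hy
    have hyZ : y ∈ Z := hZtr.mem_trans hy (hfv x hx)
    obtain ⟨a, ha, hpa⟩ := hsurj y hyZ
    have hfa : fval f a = y := ((isFunc_fval hf ha).2 y hpa).symm
    have haR : ZFSet.pair a x ∈ R := (hRpair a x).2 ⟨ha, hx, by rw [hfa]; exact hy⟩
    exact ⟨a, haR, by rw [IH a haR ha, hfa]⟩

/-- The part of the target coded as first-then-second components: given the surjection code
`v : X ↠ (X × X) × X` and `A ⊆ X`, the decoded subset of `(X × X) × X`. -/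
def decB (XXX v A : ZFSet) : ZFSet :=
  ZFSet.sep (fun b => ∃ x ∈ A, ZFSet.pair x b ∈ v) XXX

def decR (XX XXX v A : ZFSet) : ZFSet :=
  ZFSet.sep (fun q => ∃ x, ZFSet.pair q x ∈ decB XXX v A) XX

def decP (X XXX v A : ZFSet) : ZFSet :=
  ZFSet.sep (fun x => ∃ q, ZFSet.pair q x ∈ decB XXX v A) X

noncomputable def decode (X XX XXX v A : ZFSet) : ZFSet :=
  coll (decR XX XXX v A) (ZFSet.sUnion (decP X XXX v A))

/-! ## Statement 1 -/

theorem stmt1 (M : ZFSet) (hFull : Full M) :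
    (∀ (n : ℕ) (Y : ℕ → ZFSet), (∀ i ≤ n, Y i ∈ M) →
      ∀ A : ZFSet, A ⊆ nestedProd Y n → A ∈ M) ∧
    (∀ X : ZFSet, X.IsTransitive → IsMaxCard X M →
      CardEq M (ZFSet.powerset X)) := by
  obtain ⟨hTC, hProd, hSub⟩ := hFull
  constructor
  · -- part (i)
    have key : ∀ (n : ℕ) (Y : ℕ → ZFSet), (∀ i ≤ n, Y i ∈ M) → nestedProd Y n ∈ M := by
      intro n
      induction n with
      | zero => exact fun Y hY => hY 0 le_rfl
      | succ n ih =>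
        exact fun Y hY => hProd _ (ih Y fun i hi => hY i (hi.trans (Nat.le_succ n))) _
          (hY (n + 1) le_rfl)
    intro n Y hY A hA
    exact hSub _ (key n Y hY) (ZFSet.mem_powerset.2 hA)
  · -- part (ii)
    intro X hXtr hXmax
    have hXM : X ∈ M := hXmax.1
    have hPXM : ZFSet.powerset X ⊆ M := hSub X hXM
    have hEmptyM : (∅ : ZFSet) ∈ M := hPXM (ZFSet.mem_powerset.2 fun z hz =>
      absurd hz (ZFSet.notMem_empty z))
    constructor
    · -- |M| ≲ |𝒫(X)|
      right
      by_cases hX : X = ∅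
      · -- degenerate case: every member of M is empty
        have hM : ∀ Y ∈ M, Y = ∅ := by
          intro Y hY
          rcases hXmax.2 Y hY with h | ⟨f, -, -, hfs⟩
          · exact h
          · rw [ZFSet.eq_empty]
            intro y hy
            obtain ⟨x, hx, -⟩ := hfs y hy
            rw [hX] at hx
            exact ZFSet.notMem_empty x hx
        refine ⟨ZFSet.map (fun _ => (∅ : ZFSet)) (ZFSet.powerset X),
          zfSurj_map _ (fun a _ => hEmptyM) fun Y hY => ?_⟩
        exact ⟨∅, ZFSet.mem_powerset.2 fun z hz => absurd hz (ZFSet.notMem_empty z),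
          (hM Y hY).symm⟩
      · -- main case
        obtain ⟨x0, hx0⟩ : ∃ x, x ∈ X := by
          by_contra h
          push_neg at h
          exact hX ((ZFSet.eq_empty X).2 h)
        set XX := ZFSet.prod X X with hXXdef
        set XXX := ZFSet.prod XX X with hXXXdef
        have hXXM : XX ∈ M := hProd _ hXM _ hXM
        have hXXXM : XXX ∈ M := hProd _ hXXM _ hXM
        obtain ⟨v, -, hv⟩ : ∃ f ∈ M, ZFSurj X XXX f := by
          rcases hXmax.2 XXX hXXXM with h | h
          · exfalso
            have : ZFSet.pair (ZFSet.pair x0 x0) x0 ∈ XXX :=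
              ZFSet.pair_mem_prod.2 ⟨ZFSet.pair_mem_prod.2 ⟨hx0, hx0⟩, hx0⟩
            rw [h] at this
            exact ZFSet.notMem_empty _ this
          · exact h
        -- the decoding map
        set dec : ZFSet → ZFSet :=
          fun A => if decode X XX XXX v A ∈ M then decode X XX XXX v A else ∅ with hdec
        refine ⟨ZFSet.map dec (ZFSet.powerset X),
          zfSurj_map _ (fun A _ => ?_) fun Y hYM => ?_⟩
        · -- values in M
          by_cases h : decode X XX XXX v A ∈ M
          · simp [hdec, h]
          · simp [hdec, h, hEmptyM]
        · -- surjectivity onto M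
          suffices hsuff : ∃ A ∈ ZFSet.powerset X, decode X XX XXX v A = Y by
            obtain ⟨A, hA, hAY⟩ := hsuff
            exact ⟨A, hA, by simp [hdec, hAY, hYM]⟩
          by_cases hY0 : Y = ∅
          · -- empty set decoded from the empty code
            refine ⟨∅, ZFSet.mem_powerset.2 fun z hz => absurd hz (ZFSet.notMem_empty z), ?_⟩
            have hB : decB XXX v ∅ = ∅ := by
              rw [ZFSet.eq_empty]
              intro b hb
              obtain ⟨-, x, hx, -⟩ := ZFSet.mem_sep.1 hb
              exact ZFSet.notMem_empty x hx
            have hR : decR XX XXX v ∅ = ∅ := by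
              rw [ZFSet.eq_empty]
              intro q hq
              obtain ⟨-, x, hx⟩ := ZFSet.mem_sep.1 hq
              rw [hB] at hx
              exact ZFSet.notMem_empty _ hx
            have hP : decP X XXX v ∅ = ∅ := by
              rw [ZFSet.eq_empty]
              intro x hx
              obtain ⟨-, q, hq⟩ := ZFSet.mem_sep.1 hx
              rw [hB] at hq
              exact ZFSet.notMem_empty _ hq
            have hwfe : WellFounded (fun a b : ZFSet => ZFSet.pair a b ∈ (∅ : ZFSet)) :=
              ⟨fun a => ⟨a, fun b hb => absurd hb (ZFSet.notMem_empty _)⟩⟩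
            rw [decode, hR, hP, show ZFSet.sUnion ∅ = ∅ from ZFSet.sUnion_empty, hY0, ZFSet.eq_empty]
            intro y hy
            obtain ⟨a, ha, -⟩ := (mem_coll hwfe).1 hy
            exact ZFSet.notMem_empty _ ha
          · -- nonempty Y : genuine Mostowski code
            obtain ⟨Z0, hZ0M, hZ0tr, -, hYZ0⟩ := hTC Y hYM
            have hsY : ({Y} : ZFSet) ∈ M :=
              hSub Z0 hZ0M (ZFSet.mem_powerset.2 fun z hz =>
                (ZFSet.mem_singleton.1 hz) ▸ hYZ0)
            obtain ⟨Z1, hZ1M, hZ1tr, -, hsYZ1⟩ := hTC _ hsY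
            have hYZ1 : Y ∈ Z1 := hZ1tr.mem_trans (ZFSet.mem_singleton.2 rfl) hsYZ1
            obtain ⟨f, -, hf⟩ : ∃ f ∈ M, ZFSurj X Z1 f := by
              rcases hXmax.2 Z1 hZ1M with h | h
              · exact absurd (h ▸ hsYZ1) (ZFSet.notMem_empty _)
              · exact h
            -- the coded relation
            set R : ZFSet := ZFSet.sep
              (fun q => ∃ a ∈ X, ∃ b ∈ X, q = ZFSet.pair a b ∧ fval f a ∈ fval f b) XX
              with hRdef
            have hRmem : ∀ q, q ∈ R ↔
                ∃ a ∈ X, ∃ b ∈ X, q = ZFSet.pair a b ∧ fval f a ∈ fval f b := by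
              intro q
              rw [hRdef, ZFSet.mem_sep]
              refine ⟨fun h => h.2, fun h => ⟨?_, h⟩⟩
              obtain ⟨a, ha, b, hb, rfl, -⟩ := h
              exact ZFSet.pair_mem_prod.2 ⟨ha, hb⟩
            have hRXX : R ⊆ XX := fun q hq => (ZFSet.mem_sep.1 hq).1
            -- the distinguished point
            obtain ⟨p, hpX, hpf⟩ := hf.2 Y hYZ1
            have hfvp : fval f p = Y := ((isFunc_fval hf.1 hpX).2 Y hpf).symm
            obtain ⟨b0, hb0X, hb0f⟩ := hf.2 {Y} hsYZ1
            have hfvb0 : fval f b0 = {Y} := ((isFunc_fval hf.1 hb0X).2 _ hb0f).symm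
            have hq0R : ZFSet.pair p b0 ∈ R :=
              (hRmem _).2 ⟨p, hpX, b0, hb0X, rfl, by
                rw [hfvp, hfvb0]; exact ZFSet.mem_singleton.2 rfl⟩
            -- the code
            set B0 : ZFSet := ZFSet.prod R {p} with hB0def
            have hB0XXX : B0 ⊆ XXX := by
              intro b hb
              obtain ⟨q, hq, x, hx, rfl⟩ := ZFSet.mem_prod.1 hb
              exact ZFSet.pair_mem_prod.2 ⟨hRXX hq, (ZFSet.mem_singleton.1 hx) ▸ hpX⟩
            set A : ZFSet := ZFSet.sep (fun x => ∃ b ∈ B0, ZFSet.pair x b ∈ v) X with hAdef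
            refine ⟨A, ZFSet.mem_powerset.2 fun z hz => (ZFSet.mem_sep.1 hz).1, ?_⟩
            -- decoding recovers B0
            have hBA : decB XXX v A = B0 := by
              ext b
              rw [decB, ZFSet.mem_sep]
              constructor
              · rintro ⟨-, x, hxA, hxbv⟩
                obtain ⟨hxX, b', hb', hxb'v⟩ := ZFSet.mem_sep.1 hxA
                obtain ⟨w, -, hw⟩ := hv.1.2 x hxX
                rw [hw b hxbv, ← hw b' hxb'v]
                exact hb'
              · intro hb
                obtain ⟨x, hxX, hxbv⟩ := hv.2 b (hB0XXX hb)
                exact ⟨hB0XXX hb, x, ZFSet.mem_sep.2 ⟨hxX, b, hb, hxbv⟩, hxbv⟩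
            have hRA : decR XX XXX v A = R := by
              ext q
              rw [decR, ZFSet.mem_sep, hBA]
              constructor
              · rintro ⟨-, x, hqx⟩
                exact (ZFSet.pair_mem_prod.1 hqx).1
              · intro hq
                exact ⟨hRXX hq, p, ZFSet.pair_mem_prod.2 ⟨hq, ZFSet.mem_singleton.2 rfl⟩⟩
            have hPA : decP X XXX v A = {p} := by
              ext x
              rw [decP, ZFSet.mem_sep, hBA, ZFSet.mem_singleton]
              constructor
              · rintro ⟨-, q, hqx⟩
                exact ZFSet.mem_singleton.1 (ZFSet.pair_mem_prod.1 hqx).2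
              · intro hx
                rw [hx]
                exact ⟨hpX, ZFSet.pair p b0,
                  ZFSet.pair_mem_prod.2 ⟨hq0R, ZFSet.mem_singleton.2 rfl⟩⟩
            rw [decode, hRA, hPA, show ZFSet.sUnion {p} = p from ZFSet.sUnion_singleton, ← hfvp]
            exact coll_fval hZ1tr hf.1 hf.2 R hRmem p hpX
    · -- |𝒫(X)| ≲ |M|
      right
      refine ⟨ZFSet.map (fun Y => if Y ⊆ X then Y else ∅) M,
        zfSurj_map _ (fun Y _ => ?_) fun A hA => ?_⟩
      · by_cases h : Y ⊆ X
        · simp [h]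
        · simp only [h, if_false]
          exact ZFSet.mem_powerset.2 fun z hz => absurd hz (ZFSet.notMem_empty z)
      · have hAX : A ⊆ X := ZFSet.mem_powerset.1 hA
        exact ⟨A, hPXM hA, by simp [hAX]⟩

end NairianModels
end

section
/- If M is an H-like set and X is a maximal cardinality of M, then M = H_X; that is, a set Y belongs to M if and only if there is a surjection from X onto the transitive closure of {Y}. -/
namespace NairianModels

open ZFSet

/-! ### Auxiliary lemmas for Statement 2 -/

lemma mem_transCl_iff {x z : ZFSet} : z ∈ transCl x ↔ ∃ n : ℕ, z ∈ iterUnion x n := by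
  simp only [transCl, ZFSet.mem_sUnion, ZFSet.mem_range, Set.mem_range]
  constructor
  · rintro ⟨t, ⟨n, rfl⟩, hz⟩; exact ⟨n, hz⟩
  · rintro ⟨n, hz⟩; exact ⟨_, ⟨n, rfl⟩, hz⟩

lemma subset_transCl (x : ZFSet) : x ⊆ transCl x := fun z hz =>
  mem_transCl_iff.2 ⟨0, hz⟩

lemma transCl_isTransitive (x : ZFSet) : (transCl x).IsTransitive := by
  intro y hy a ha
  obtain ⟨n, hn⟩ := mem_transCl_iff.1 hy
  exact mem_transCl_iff.2 ⟨n + 1, ZFSet.mem_sUnion.2 ⟨y, hn, ha⟩⟩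

lemma iterUnion_subset {T x : ZFSet} (hT : T.IsTransitive) (hx : x ⊆ T) :
    ∀ n, iterUnion x n ⊆ T
  | 0 => hx
  | n + 1 => by
    intro a ha
    obtain ⟨b, hb, hab⟩ := ZFSet.mem_sUnion.1 ha
    exact hT b (iterUnion_subset hT hx n hb) hab

lemma transCl_subset {T x : ZFSet} (hT : T.IsTransitive) (hx : x ⊆ T) :
    transCl x ⊆ T := fun z hz => by
  obtain ⟨n, hn⟩ := mem_transCl_iff.1 hz
  exact iterUnion_subset hT hx n hn

lemma self_mem_transCl_singleton (Y : ZFSet) : Y ∈ transCl ({Y} : ZFSet) :=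
  subset_transCl _ (ZFSet.mem_singleton.2 rfl)

/-- Restriction of a surjection to a nonempty subset of the codomain. -/
lemma surj_restrict {X T f S s0 : ZFSet} (hf : ZFSurj X T f) (hS : S ⊆ T) (hs0 : s0 ∈ S) :
    ∃ g, ZFSurj X S g := by
  classical
  let v : ZFSet → ZFSet := fun x => if h : ∃ t, ZFSet.pair x t ∈ f then Classical.choose h else ∅
  have hv : ∀ x, ∀ t, ZFSet.pair x t ∈ f → v x = t := by
    intro x t ht
    have hex : ∃ t, ZFSet.pair x t ∈ f := ⟨t, ht⟩
    have hcs := Classical.choose_spec hex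
    have hxX : x ∈ X := by
      have := hf.1.1 hcs
      exact (ZFSet.pair_mem_prod.1 this).1
    obtain ⟨w, _, hw⟩ := hf.1.2 x hxX
    simp only [v, dif_pos hex]
    rw [hw _ hcs, hw _ ht]
  let g : ZFSet → ZFSet := fun x => if v x ∈ S then v x else s0
  haveI : ZFSet.Definable₁ g := Classical.allZFSetDefinable _
  refine ⟨ZFSet.map g X, ?_, ?_⟩
  · rw [ZFSet.map_isFunc]
    intro z _
    by_cases h : v z ∈ S
    · simpa [g, h] using h
    · simpa [g, h] using hs0
  · intro y hy
    obtain ⟨x, hx, hxy⟩ := hf.2 y (hS hy)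
    have hvx : v x = y := hv x y hxy
    refine ⟨x, hx, ?_⟩
    rw [ZFSet.mem_map]
    refine ⟨x, hx, ?_⟩
    have : g x = y := by simp [g, hvx, hy]
    rw [this]

/-! ## Statement 2 -/

theorem stmt2 (M X : ZFSet) (hM : HLike M) (hX : IsMaxCard X M) :
    ∀ Y : ZFSet, Y ∈ M ↔ ∃ f, ZFSurj X (transCl ({Y} : ZFSet)) f := by
  classical
  obtain ⟨hMtrans, ⟨hTC, _hPC, hSC⟩, hHier, hSR⟩ := hM
  obtain ⟨hXM, hmax⟩ := hX
  have hSReg : StronglyRegular M := hSR ⟨X, hXM, hmax⟩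
  obtain ⟨F, hF1, hF2, _hF3, hF4⟩ := hHier
  have hemptyM : (∅ : ZFSet) ∈ M := by
    have hMne : M ≠ ∅ := fun h => by rw [h] at hXM; exact (ZFSet.notMem_empty X) hXM
    obtain ⟨y, hyM, hyint⟩ := ZFSet.regularity M hMne
    have hy0 : y = ∅ := by
      rw [ZFSet.eq_empty]
      intro a ha
      have haM : a ∈ M := hMtrans y hyM ha
      have : a ∈ M ∩ y := ZFSet.mem_inter.2 ⟨haM, ha⟩
      rw [hyint] at this
      exact ZFSet.notMem_empty a this
    rwa [hy0] at hyM
  intro Y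
  constructor
  · intro hY
    obtain ⟨Z, hZM, hZtr, _hZsub, hYZ⟩ := hTC Y hY
    have hTcl : transCl ({Y} : ZFSet) ⊆ Z := by
      refine transCl_subset hZtr ?_
      intro a ha
      rw [ZFSet.mem_singleton] at ha
      rwa [ha]
    have hTclM : transCl ({Y} : ZFSet) ∈ M := hSC Z hZM (ZFSet.mem_powerset.2 hTcl)
    rcases hmax _ hTclM with h0 | ⟨f, _, hf⟩
    · exact absurd (self_mem_transCl_singleton Y)
        (by rw [h0]; exact ZFSet.notMem_empty Y)
    · exact ⟨f, hf⟩
  · have key : ∀ Y : ZFSet, (∃ f, ZFSurj X (transCl ({Y} : ZFSet)) f) → Y ∈ M := by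
      intro Y
      induction Y using ZFSet.inductionOn with
      | _ Y IH =>
        rintro ⟨f, hf⟩
        have hYin : Y ∈ transCl ({Y} : ZFSet) := self_mem_transCl_singleton Y
        have hYsubM : ∀ y ∈ Y, y ∈ M := by
          intro y hy
          apply IH y hy
          have hyT : y ∈ transCl ({Y} : ZFSet) := transCl_isTransitive _ Y hYin hy
          have hsub : transCl ({y} : ZFSet) ⊆ transCl ({Y} : ZFSet) := by
            refine transCl_subset (transCl_isTransitive _) ?_
            intro a ha
            rw [ZFSet.mem_singleton] at ha
            rwa [ha]
          exact surj_restrict hf hsub (self_mem_transCl_singleton y)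
        by_cases hY0 : Y = ∅
        · rwa [hY0]
        · obtain ⟨y0, hy0⟩ : ∃ y0, y0 ∈ Y := by
            by_contra h
            push_neg at h
            exact hY0 ((ZFSet.eq_empty Y).2 h)
          have hYsubT : Y ⊆ transCl ({Y} : ZFSet) := transCl_isTransitive _ Y hYin
          obtain ⟨g, hg⟩ := surj_restrict hf hYsubT hy0
          let v : ZFSet → ZFSet :=
            fun x => if h : ∃ t, ZFSet.pair x t ∈ g then Classical.choose h else ∅
          have hv : ∀ x, ∀ t, ZFSet.pair x t ∈ g → v x = t := by
            intro x t ht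
            have hex : ∃ t, ZFSet.pair x t ∈ g := ⟨t, ht⟩
            have hcs := Classical.choose_spec hex
            have hxX : x ∈ X := (ZFSet.pair_mem_prod.1 (hg.1.1 hcs)).1
            obtain ⟨w, _, hw⟩ := hg.1.2 x hxX
            simp only [v, dif_pos hex]
            rw [hw _ hcs, hw _ ht]
          have hvY : ∀ x ∈ X, ZFSet.pair x (v x) ∈ g ∧ v x ∈ Y := by
            intro x hx
            obtain ⟨w, hw, _⟩ := hg.1.2 x hx
            have := hv x w hw
            rw [this]
            exact ⟨hw, (ZFSet.pair_mem_prod.1 (hg.1.1 hw)).2⟩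
          let o : ZFSet → ZFSet :=
            fun x => if h : ∃ α, IsOrd α ∧ α ∈ M ∧ v x ∈ F α then Classical.choose h else ∅
          have ho : ∀ x ∈ X, IsOrd (o x) ∧ o x ∈ M ∧ v x ∈ F (o x) := by
            intro x hx
            have hvM : v x ∈ M := hYsubM _ (hvY x hx).2
            have hex : ∃ α, IsOrd α ∧ α ∈ M ∧ v x ∈ F α := (hF4 (v x)).1 hvM
            simpa only [o, dif_pos hex] using Classical.choose_spec hex
          haveI : ZFSet.Definable₁ o := Classical.allZFSetDefinable _
          obtain ⟨β, hβord, hβM, hβbd⟩ := hSReg X hXM (ZFSet.map o X)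
            (by
              intro p hp
              obtain ⟨z, hz, hzp⟩ := ZFSet.mem_map.1 hp
              exact ⟨z, hz, o z, (ho z hz).1, (ho z hz).2.1, hzp.symm⟩)
            (fun x hx => ⟨o x, ZFSet.mem_map.2 ⟨x, hx, rfl⟩⟩)
            (by
              intro x _ a b ha hb
              obtain ⟨z, _, hz⟩ := ZFSet.mem_map.1 ha
              obtain ⟨w, _, hw⟩ := ZFSet.mem_map.1 hb
              obtain ⟨hz1, hz2⟩ := ZFSet.pair_injective hz
              obtain ⟨hw1, hw2⟩ := ZFSet.pair_injective hw
              rw [← hz2, ← hw2, hz1, hw1])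
          have hFβM : F β ∈ M := (hF1 β hβord hβM).2
          refine hSC _ hFβM (ZFSet.mem_powerset.2 ?_)
          intro y hy
          obtain ⟨x, hx, hxy⟩ := hg.2 y hy
          have hvx : v x = y := hv x y hxy
          have hoxβ : o x ∈ β := hβbd x hx (o x) (ZFSet.mem_map.2 ⟨x, hx, rfl⟩)
          have hmono : F (o x) ⊆ F β :=
            hF2 (o x) β (ho x hx).1 hβord (ho x hx).2.1 hβM hoxβ
          have : v x ∈ F (o x) := (ho x hx).2.2
          rw [hvx] at this
          exact hmono this
    exact key Y


end NairianModels
end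

section
/- Every H-like set M of successor type satisfies the closure properties expressing ZF minus Powerset: M is transitive; for all x, y ∈ M, {x, y} ∈ M; for all x ∈ M, ⋃x ∈ M; ω ∈ M; every subset of an element of M belongs to M; and (Replacement) for every Y ∈ M and every assignment F of an element F(y) ∈ M to each y ∈ Y, the image {F(y) : y ∈ Y} belongs to M. -/
namespace NairianModels

open ZFSet

/-! ## Auxiliary material for Statement 3 -/

/-- The n-th von Neumann natural number as a `ZFSet`. -/
def zNat : ℕ → ZFSet
  | 0 => ∅
  | n + 1 => insert (zNat n) (zNat n)

lemma zNat_mk : ∀ n : ℕ, ZFSet.mk (PSet.ofNat n) = zNat n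
  | 0 => rfl
  | n + 1 => by
    show insert (ZFSet.mk (PSet.ofNat n)) (ZFSet.mk (PSet.ofNat n)) = _
    rw [zNat_mk n]; rfl

lemma mem_omega_iff {y : ZFSet} : y ∈ ZFSet.omega ↔ ∃ n : ℕ, y = zNat n := by
  constructor
  · intro h
    induction y using Quotient.inductionOn with
    | h p =>
      obtain ⟨⟨n⟩, hn⟩ := ZFSet.mk_mem_iff.1 h
      exact ⟨n, (ZFSet.sound hn).trans (zNat_mk n)⟩
  · rintro ⟨n, rfl⟩
    induction n with
    | zero => exact ZFSet.omega_zero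
    | succ n ih => exact ZFSet.omega_succ ih

lemma zNat_mem_succ (n : ℕ) : zNat n ∈ zNat (n + 1) :=
  ZFSet.mem_insert _ _

lemma isOrd_zNat (n : ℕ) : IsOrd (zNat n) := by
  induction n with
  | zero =>
    exact ⟨fun y hy => absurd hy (ZFSet.notMem_empty y),
      fun y hy => absurd hy (ZFSet.notMem_empty y),
      fun a ha => absurd ha (ZFSet.notMem_empty a)⟩
  | succ n ih =>
    obtain ⟨ht, hlin, htr⟩ := ih
    have hsub : zNat n ⊆ zNat (n + 1) := fun z hz =>
      ZFSet.mem_insert_iff.2 (Or.inr hz)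
    refine ⟨?_, ?_, ?_⟩
    · intro y hy
      rcases ZFSet.mem_insert_iff.1 hy with rfl | hy
      · exact hsub
      · exact fun z hz => hsub (ht y hy hz)
    · intro y hy z hz
      rcases ZFSet.mem_insert_iff.1 hy with rfl | hy <;>
        rcases ZFSet.mem_insert_iff.1 hz with rfl | hz
      · exact Or.inr (Or.inl rfl)
      · exact Or.inr (Or.inr hz)
      · exact Or.inl hy
      · exact hlin y hy z hz
    · intro a ha b hb c hc hab hbc
      rcases ZFSet.mem_insert_iff.1 hc with rfl | hc
      · exact ht b hbc hab
      · have hb' : b ∈ zNat n := ht c hc hbc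
        exact htr a (ht b hb' hab) b hb' c hc hab hbc

lemma zNat_toSet_finite (n : ℕ) : (zNat n).toSet.Finite := by
  induction n with
  | zero => simp [zNat, show (∅ : ZFSet).toSet = ∅ from Set.ext fun z => iff_of_false (ZFSet.notMem_empty z) (Set.notMem_empty z)]
  | succ n ih =>
    show (insert (zNat n) (zNat n) : ZFSet).toSet.Finite
    rw [show (insert (zNat n) (zNat n) : ZFSet).toSet = insert (zNat n) (zNat n).toSet from Set.ext fun z => ZFSet.mem_insert_iff]
    exact ih.insert _

lemma zNat_ncard (n : ℕ) : (zNat n).toSet.ncard = n := by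
  induction n with
  | zero => simp [zNat, show (∅ : ZFSet).toSet = ∅ from Set.ext fun z => iff_of_false (ZFSet.notMem_empty z) (Set.notMem_empty z)]
  | succ n ih =>
    show (insert (zNat n) (zNat n) : ZFSet).toSet.ncard = n + 1
    rw [show (insert (zNat n) (zNat n) : ZFSet).toSet = insert (zNat n) (zNat n).toSet from Set.ext fun z => ZFSet.mem_insert_iff]
    have h1 : zNat n ∉ (zNat n).toSet := fun h => ZFSet.mem_irrefl (zNat n) h
    rw [Set.ncard_insert_of_notMem h1 (zNat_toSet_finite n), ih]

lemma surj_card_le {X Y f : ZFSet} (hf : ZFSurj X Y f) (hX : X.toSet.Finite) :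
    Y.toSet.Finite ∧ Y.toSet.ncard ≤ X.toSet.ncard := by
  classical
  set g : ZFSet → ZFSet := fun x =>
    if h : ∃ w, ZFSet.pair x w ∈ f then Classical.choose h else ∅ with hg
  have hsub : Y.toSet ⊆ g '' X.toSet := by
    intro y hy
    obtain ⟨x, hx, hxy⟩ := hf.2 y hy
    refine ⟨x, hx, ?_⟩
    have hex : ∃ w, ZFSet.pair x w ∈ f := ⟨y, hxy⟩
    obtain ⟨w, hw, huniq⟩ := hf.1.2 x hx
    have h1 : Classical.choose hex = w := huniq _ (Classical.choose_spec hex)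
    have h2 : y = w := huniq _ hxy
    simp only [hg, dif_pos hex]
    rw [h1, h2]
  have hfin : Y.toSet.Finite := (hX.image g).subset hsub
  exact ⟨hfin, le_trans (Set.ncard_le_ncard hsub (hX.image g))
    (Set.ncard_image_le hX)⟩

lemma zNat_ne_empty (n : ℕ) : zNat (n + 1) ≠ ∅ := by
  intro h
  exact ZFSet.notMem_empty _ (h ▸ zNat_mem_succ n)

/-! ## Statement 3 -/

theorem stmt3 (M : ZFSet) (hM : HLike M) (hSucc : SuccType M) :
    M.IsTransitive ∧
    (∀ x ∈ M, ∀ y ∈ M, ({x, y} : ZFSet) ∈ M) ∧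
    (∀ x ∈ M, ZFSet.sUnion x ∈ M) ∧
    ZFSet.omega ∈ M ∧
    (∀ x ∈ M, ∀ A : ZFSet, A ⊆ x → A ∈ M) ∧
    (∀ Y ∈ M, ∀ F : ZFSet → ZFSet, (∀ y ∈ Y, F y ∈ M) →
      ∃ R ∈ M, ∀ z, z ∈ R ↔ ∃ y ∈ Y, z = F y) := by
  classical
  obtain ⟨htrans, ⟨hTC, hProd, hSub⟩, hHier, hSRs⟩ := hM
  have hSR := hSRs hSucc
  obtain ⟨X, hXM, hXmax⟩ := hSucc
  -- Pairing
  have pairM : ∀ x ∈ M, ∀ y ∈ M, ({x, y} : ZFSet) ∈ M := by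
    intro x hx y hy
    obtain ⟨Z1, hZ1M, _, _, hxZ1⟩ := hTC x hx
    obtain ⟨Z2, hZ2M, _, _, hyZ2⟩ := hTC y hy
    have hp : ZFSet.pair x y ∈ ZFSet.prod Z1 Z2 :=
      ZFSet.pair_mem_prod.2 ⟨hxZ1, hyZ2⟩
    have hpM : ZFSet.pair x y ∈ M := htrans _ (hProd Z1 hZ1M Z2 hZ2M) hp
    exact htrans _ hpM (by simp [ZFSet.pair, ZFSet.mem_insert_iff])
  -- Union
  have unM : ∀ x ∈ M, ZFSet.sUnion x ∈ M := by
    intro x hx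
    obtain ⟨Z, hZM, hZt, _, hxZ⟩ := hTC x hx
    refine hSub Z hZM (ZFSet.mem_powerset.2 fun z hz => ?_)
    obtain ⟨w, hwx, hzw⟩ := ZFSet.mem_sUnion.1 hz
    exact hZt w (hZt x hxZ hwx) hzw
  -- Subsets
  have subM : ∀ x ∈ M, ∀ A : ZFSet, A ⊆ x → A ∈ M := fun x hx A hA =>
    hSub x hx (ZFSet.mem_powerset.2 hA)
  have emptyM : (∅ : ZFSet) ∈ M := subM X hXM ∅ (ZFSet.empty_subset X)
  -- all naturals belong to M
  have natM : ∀ n : ℕ, zNat n ∈ M := by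
    intro n
    induction n with
    | zero => exact emptyM
    | succ n ih =>
      have h1 : ({zNat n, zNat n} : ZFSet) ∈ M := pairM _ ih _ ih
      have e1 : ({zNat n, zNat n} : ZFSet) = {zNat n} := by
        apply ZFSet.ext; intro z
        simp [ZFSet.mem_insert_iff, ZFSet.mem_singleton]
      rw [e1] at h1
      have h2 : ({zNat n, ({zNat n} : ZFSet)} : ZFSet) ∈ M := pairM _ ih _ h1
      have h3 := unM _ h2
      have e2 : ZFSet.sUnion ({zNat n, ({zNat n} : ZFSet)} : ZFSet)
          = zNat (n + 1) := by
        apply ZFSet.ext; intro z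
        rw [ZFSet.mem_sUnion]
        show _ ↔ z ∈ insert (zNat n) (zNat n)
        rw [ZFSet.mem_insert_iff]
        simp only [ZFSet.mem_insert_iff, ZFSet.mem_singleton]
        constructor
        · rintro ⟨w, (rfl | rfl), hzw⟩
          · exact Or.inr hzw
          · exact Or.inl (ZFSet.mem_singleton.1 hzw)
        · rintro (rfl | hz)
          · exact ⟨{zNat n}, Or.inr rfl, ZFSet.mem_singleton.2 rfl⟩
          · exact ⟨zNat n, Or.inl rfl, hz⟩
      rwa [e2] at h3
  -- X is infinite
  have hXinf : X.toSet.Infinite := by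
    intro hfin
    set k := X.toSet.ncard with hk
    rcases hXmax (zNat (k + 1)) (natM (k + 1)) with h | ⟨f, _, hf⟩
    · exact zNat_ne_empty k h
    · have := (surj_card_le hf hfin).2
      rw [zNat_ncard] at this
      omega
  -- omega ∈ M
  have omegaM : ZFSet.omega ∈ M := by
    let e : ℕ → ZFSet := fun n => (Set.Infinite.natEmbedding X.toSet hXinf n).1
    have heX : ∀ n, e n ∈ X := fun n => (Set.Infinite.natEmbedding X.toSet hXinf n).2
    have he_inj : Function.Injective e := fun m n h =>
      (Set.Infinite.natEmbedding X.toSet hXinf).injective (Subtype.coe_injective h)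
    let g : ZFSet → ZFSet := fun x =>
      if h : ∃ n, e n = x then zNat (Classical.choose h + 1) else ∅
    have hg : ∀ x, ∃ m, g x = zNat m := by
      intro x
      dsimp only [g]
      split_ifs with h
      · exact ⟨_, rfl⟩
      · exact ⟨0, rfl⟩
    have hge : ∀ n, g (e n) = zNat (n + 1) := by
      intro n
      have hex : ∃ m, e m = e n := ⟨n, rfl⟩
      have : Classical.choose hex = n := he_inj (Classical.choose_spec hex)
      dsimp only [g]
      rw [dif_pos hex, this]
    let kf : ZFSet → ZFSet := fun x => ZFSet.pair x (g x)
    haveI : ZFSet.Definable₁ kf := Classical.allZFSetDefinable _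
    set f : ZFSet := ZFSet.image kf X with hfdef
    have hmemf : ∀ p, p ∈ f ↔ ∃ x ∈ X, kf x = p := fun p => ZFSet.mem_image
    obtain ⟨β, hβord, hβM, hβbd⟩ := hSR X hXM f
      (by
        intro p hp
        obtain ⟨x, hx, rfl⟩ := (hmemf p).1 hp
        obtain ⟨m, hm⟩ := hg x
        exact ⟨x, hx, g x, hm ▸ isOrd_zNat m, hm ▸ natM m, rfl⟩)
      (fun x hx => ⟨g x, (hmemf _).2 ⟨x, hx, rfl⟩⟩)
      (by
        intro x hx o o' ho ho'
        obtain ⟨x1, _, h1⟩ := (hmemf _).1 ho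
        obtain ⟨x2, _, h2⟩ := (hmemf _).1 ho'
        obtain ⟨rfl, rfl⟩ := ZFSet.pair_injective h1
        obtain ⟨rfl, rfl⟩ := ZFSet.pair_injective h2
        rfl)
    have hnatβ : ∀ n : ℕ, zNat n ∈ β := by
      intro n
      have h1 : zNat (n + 1) ∈ β := by
        have := hβbd (e n) (heX n) (g (e n)) ((hmemf _).2 ⟨e n, heX n, rfl⟩)
        rwa [hge n] at this
      exact hβord.1 _ h1 (zNat_mem_succ n)
    refine subM β hβM ZFSet.omega fun y hy => ?_
    obtain ⟨n, rfl⟩ := mem_omega_iff.1 hy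
    exact hnatβ n
  -- Replacement
  refine ⟨htrans, pairM, unM, omegaM, subM, ?_⟩
  intro Y hY F hF
  obtain ⟨G, hG1, hG2, _, hG4⟩ := hHier
  have hch : ∀ y, y ∈ Y → ∃ α, IsOrd α ∧ α ∈ M ∧ F y ∈ G α := fun y hy =>
    (hG4 (F y)).1 (hF y hy)
  let ord : ZFSet → ZFSet := fun y =>
    if h : ∃ α, IsOrd α ∧ α ∈ M ∧ F y ∈ G α then Classical.choose h else ∅
  have hord : ∀ y, y ∈ Y → IsOrd (ord y) ∧ ord y ∈ M ∧ F y ∈ G (ord y) := by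
    intro y hy
    have hex := hch y hy
    dsimp only [ord]
    rw [dif_pos hex]
    exact Classical.choose_spec hex
  let kf : ZFSet → ZFSet := fun y => ZFSet.pair y (ord y)
  haveI : ZFSet.Definable₁ kf := Classical.allZFSetDefinable _
  set f : ZFSet := ZFSet.image kf Y with hfdef
  have hmemf : ∀ p, p ∈ f ↔ ∃ y ∈ Y, kf y = p := fun p => ZFSet.mem_image
  obtain ⟨β, hβord, hβM, hβbd⟩ := hSR Y hY f
    (by
      intro p hp
      obtain ⟨y, hy, rfl⟩ := (hmemf p).1 hp
      exact ⟨y, hy, ord y, (hord y hy).1, (hord y hy).2.1, rfl⟩)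
    (fun y hy => ⟨ord y, (hmemf _).2 ⟨y, hy, rfl⟩⟩)
    (by
      intro y hy o o' ho ho'
      obtain ⟨y1, _, h1⟩ := (hmemf _).1 ho
      obtain ⟨y2, _, h2⟩ := (hmemf _).1 ho'
      obtain ⟨rfl, rfl⟩ := ZFSet.pair_injective h1
      obtain ⟨rfl, rfl⟩ := ZFSet.pair_injective h2
      rfl)
  haveI : ZFSet.Definable₁ F := Classical.allZFSetDefinable _
  refine ⟨ZFSet.image F Y, ?_, ?_⟩
  · have hGβ := hG1 β hβord hβM
    refine subM (G β) hGβ.2 _ fun z hz => ?_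
    obtain ⟨y, hy, rfl⟩ := ZFSet.mem_image.1 hz
    have hordβ : ord y ∈ β :=
      hβbd y hy (ord y) ((hmemf _).2 ⟨y, hy, rfl⟩)
    exact hG2 (ord y) β (hord y hy).1 hβord (hord y hy).2.1 hβM hordβ
      (hord y hy).2.2
  · intro z
    rw [ZFSet.mem_image]
    constructor
    · rintro ⟨y, hy, rfl⟩; exact ⟨y, hy, rfl⟩
    · rintro ⟨y, hy, rfl⟩; exact ⟨y, hy, rfl⟩

end NairianModels
end

section
/- Suppose M is an H-like set of successor type, Y ∈ M, and A is an assignment of a set A_y ∈ M to each y ∈ Y. Then the function y ↦ A_y, coded as the set of ordered pairs {⟨y, A_y⟩ : y ∈ Y}, belongs to M, and the union ⋃_{y∈Y} A_y belongs to M. -/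
namespace NairianModels

open ZFSet

/-! ## Statement 4 -/

theorem stmt4 (M Y : ZFSet) (hM : HLike M) (hSucc : SuccType M) (hY : Y ∈ M)
    (A : ZFSet → ZFSet) (hA : ∀ y ∈ Y, A y ∈ M) :
    (∃ f ∈ M, ∀ p, p ∈ f ↔ ∃ y ∈ Y, p = ZFSet.pair y (A y)) ∧
    (∃ U ∈ M, ∀ z, z ∈ U ↔ ∃ y ∈ Y, z ∈ A y) := by
  classical
  obtain ⟨hMtr, ⟨hTC, hPC, hSC⟩, ⟨F, hF1, hF2, _, hF4⟩, hSR⟩ := hM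
  have SR := hSR hSucc
  -- choice of level for each A y
  set g : ZFSet → ZFSet := fun y =>
    if h : ∃ α, IsOrd α ∧ α ∈ M ∧ A y ∈ F α then h.choose else ∅ with hg
  have hgspec : ∀ y ∈ Y, IsOrd (g y) ∧ g y ∈ M ∧ A y ∈ F (g y) := by
    intro y hy
    have h : ∃ α, IsOrd α ∧ α ∈ M ∧ A y ∈ F α := (hF4 (A y)).mp (hA y hy)
    simp only [hg, dif_pos h]
    exact h.choose_spec
  haveI : Definable₁ g := Classical.allZFSetDefinable _
  haveI : Definable₁ A := Classical.allZFSetDefinable _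
  obtain ⟨β, hβord, hβM, hβbd⟩ := SR Y hY (ZFSet.map g Y)
    (by
      intro p hp
      obtain ⟨z, hz, hzp⟩ := mem_map.mp hp
      exact ⟨z, hz, g z, (hgspec z hz).1, (hgspec z hz).2.1, hzp.symm⟩)
    (fun x hx => ⟨g x, mem_map.mpr ⟨x, hx, rfl⟩⟩)
    (by
      intro x hx o o' ho ho'
      obtain ⟨z, hz, hzp⟩ := mem_map.mp ho
      obtain ⟨z', hz', hzp'⟩ := mem_map.mp ho'
      obtain ⟨e1, e2⟩ := pair_injective hzp
      obtain ⟨e1', e2'⟩ := pair_injective hzp'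
      rw [← e2, ← e2', e1, e1'])
  have hAFβ : ∀ y ∈ Y, A y ∈ F β := by
    intro y hy
    have hgy : g y ∈ β := hβbd y hy (g y) (mem_map.mpr ⟨y, hy, rfl⟩)
    exact hF2 (g y) β (hgspec y hy).1 hβord (hgspec y hy).2.1 hβM hgy
      (hgspec y hy).2.2
  obtain ⟨hFβtr, hFβM⟩ := hF1 β hβord hβM
  obtain ⟨Z, hZM, hZtr, hZsub, hYZ⟩ := hTC Y hY
  have hYsubZ : Y ⊆ Z := hZtr.subset_of_mem hYZ
  constructor
  · refine ⟨ZFSet.map A Y, ?_, ?_⟩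
    · apply hSC (ZFSet.prod Z (F β)) (hPC Z hZM (F β) hFβM)
      rw [mem_powerset]
      intro p hp
      obtain ⟨z, hz, hzp⟩ := mem_map.mp hp
      rw [← hzp]
      exact pair_mem_prod.mpr ⟨hYsubZ hz, hAFβ z hz⟩
    · intro p
      rw [mem_map]
      constructor
      · rintro ⟨z, hz, rfl⟩; exact ⟨z, hz, rfl⟩
      · rintro ⟨z, hz, rfl⟩; exact ⟨z, hz, rfl⟩
  · refine ⟨ZFSet.sep (fun z => ∃ y ∈ Y, z ∈ A y) (F β), ?_, ?_⟩
    · apply hSC (F β) hFβM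
      rw [mem_powerset]
      intro z hz
      exact (mem_sep.mp hz).1
    · intro z
      rw [mem_sep]
      constructor
      · exact fun h => h.2
      · rintro ⟨y, hy, hzy⟩
        exact ⟨hFβtr.subset_of_mem (hAFβ y hy) hzy, y, hy, hzy⟩


end NairianModels
end

section
/- If M is an H-like set of successor type and X ∈ M, then M is X-closed: X ∪ {X} ⊆ M, and every function from X into M (coded as a set of ordered pairs with domain X and values in M) is an element of M. -/
namespace NairianModels

open ZFSet

/-! ## Statement 5 -/

theorem stmt5 (M X : ZFSet) (hM : HLike M) (hSucc : SuccType M) (hX : X ∈ M) :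
    XClosed X M := by
  classical
  obtain ⟨htrans, ⟨hTC, hProd, hSub⟩, ⟨F, hFord, hFmono, _, hFtot⟩, hSR⟩ := hM
  have hreg := hSR hSucc
  refine ⟨fun z hz => htrans X hX hz, hX, ?_⟩
  rintro f ⟨hsub, hfun⟩
  -- value function
  set v : ZFSet → ZFSet := fun x => if h : ∃ w, ZFSet.pair x w ∈ f then h.choose else ∅ with hv
  have hvf : ∀ x ∈ X, ZFSet.pair x (v x) ∈ f := by
    intro x hx
    obtain ⟨w, hw, _⟩ := hfun x hx
    have h : ∃ w, ZFSet.pair x w ∈ f := ⟨w, hw⟩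
    simp only [hv, dif_pos h]
    exact h.choose_spec
  have hvuniq : ∀ x ∈ X, ∀ b, ZFSet.pair x b ∈ f → b = v x := by
    intro x hx b hb
    obtain ⟨w, hw, huniq⟩ := hfun x hx
    rw [huniq b hb, huniq (v x) (hvf x hx)]
  have hvM : ∀ x ∈ X, v x ∈ M := fun x hx =>
    (ZFSet.pair_mem_prod.mp (hsub (hvf x hx))).2
  -- ordinal rank function
  set o : ZFSet → ZFSet := fun x =>
    if h : ∃ α, IsOrd α ∧ α ∈ M ∧ v x ∈ F α then h.choose else ∅ with ho'
  have ho : ∀ x ∈ X, IsOrd (o x) ∧ o x ∈ M ∧ v x ∈ F (o x) := by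
    intro x hx
    have h : ∃ α, IsOrd α ∧ α ∈ M ∧ v x ∈ F α := (hFtot (v x)).mp (hvM x hx)
    simp only [ho', dif_pos h]
    exact h.choose_spec
  -- code it as a set of pairs
  set g : ZFSet := ZFSet.sep (fun p => ∃ x ∈ X, p = ZFSet.pair x (o x)) (ZFSet.prod X M)
    with hg
  have hmemg : ∀ x ∈ X, ZFSet.pair x (o x) ∈ g := by
    intro x hx
    rw [hg, ZFSet.mem_sep]
    exact ⟨ZFSet.pair_mem_prod.mpr ⟨hx, (ho x hx).2.1⟩, x, hx, rfl⟩
  have hgchar : ∀ p ∈ g, ∃ x ∈ X, p = ZFSet.pair x (o x) := by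
    intro p hp
    rw [hg, ZFSet.mem_sep] at hp
    exact hp.2
  obtain ⟨β, hβord, hβM, hβbound⟩ := hreg X hX g
    (by
      intro p hp
      obtain ⟨x, hx, rfl⟩ := hgchar p hp
      exact ⟨x, hx, o x, (ho x hx).1, (ho x hx).2.1, rfl⟩)
    (fun x hx => ⟨o x, hmemg x hx⟩)
    (by
      intro x hx o₁ o₂ h₁ h₂
      obtain ⟨x₁, hx₁, he₁⟩ := hgchar _ h₁
      obtain ⟨x₂, hx₂, he₂⟩ := hgchar _ h₂
      obtain ⟨rfl, rfl⟩ := ZFSet.pair_injective he₁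
      obtain ⟨rfl, rfl⟩ := ZFSet.pair_injective he₂
      rfl)
  -- all values of f lie in F β
  have hval : ∀ x ∈ X, v x ∈ F β := by
    intro x hx
    rcases ho x hx with ⟨hoOrd, hoM, hvF⟩
    have hoβ : o x ∈ β := hβbound x hx (o x) (hmemg x hx)
    exact hFmono (o x) β hoOrd hβord hoM hβM hoβ hvF
  -- f ⊆ X × F β, conclude by fullness
  have hFβM : F β ∈ M := (hFord β hβord hβM).2
  have hfsub : f ⊆ ZFSet.prod X (F β) := by
    intro p hp
    obtain ⟨a, ha, b, hb, rfl⟩ := ZFSet.mem_prod.mp (hsub hp)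
    have := hvuniq a ha b hp
    subst this
    exact ZFSet.pair_mem_prod.mpr ⟨ha, hval a ha⟩
  exact hSub (ZFSet.prod X (F β)) (hProd X hX (F β) hFβM)
    (ZFSet.mem_powerset.mpr hfsub)

end NairianModels
end

section
/- Suppose κ is an infinite regular cardinal (a von Neumann ordinal such that no function from an ordinal α < κ into κ has range unbounded in κ) such that for all ordinals α < β < κ, |α^β| ≲ κ, where α^β denotes the set of all functions from β to α. Suppose W is a transitive <κ-closed set. Then for every A ⊆ κ there is a set X ⊆ W such that (X, ∈) is an elementary substructure of (W, ∈), A ⊆ X, |X| ≲ κ, and X is <κ-closed. (The paper proves this in ZF + DC_κ; in the ambient ZFC setting DC_κ is automatic.) -/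
namespace NairianModels

open ZFSet

/-! ### Auxiliary material for Statement 8 -/

set_option linter.unusedSectionVars false

section Stmt8Aux

/-- The graph of a Lean-level function restricted to a ZF set, as a ZF set. -/
noncomputable def graphOf (η : ZFSet) (F : ZFSet → ZFSet) : ZFSet :=
  @ZFSet.image (fun x => ZFSet.pair x (F x)) (Classical.allZFSetDefinable _) η

theorem mem_graphOf {η : ZFSet} {F : ZFSet → ZFSet} {y : ZFSet} :
    y ∈ graphOf η F ↔ ∃ x ∈ η, ZFSet.pair x (F x) = y :=
  @ZFSet.mem_image _ (Classical.allZFSetDefinable _) _ _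

theorem pair_mem_graphOf {η : ZFSet} {F : ZFSet → ZFSet} {x y : ZFSet} :
    ZFSet.pair x y ∈ graphOf η F ↔ x ∈ η ∧ y = F x := by
  rw [mem_graphOf]
  constructor
  · rintro ⟨z, hz, he⟩
    obtain ⟨rfl, rfl⟩ := ZFSet.pair_injective he.symm
    exact ⟨hz, rfl⟩
  · rintro ⟨hx, rfl⟩; exact ⟨x, hx, rfl⟩

theorem graphOf_isFunc {η Y : ZFSet} {F : ZFSet → ZFSet} (h : ∀ x ∈ η, F x ∈ Y) :
    ZFSet.IsFunc η Y (graphOf η F) :=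
  ⟨fun p hp => by
    obtain ⟨x, hx, rfl⟩ := mem_graphOf.1 hp
    exact ZFSet.pair_mem_prod.2 ⟨hx, h x hx⟩,
   fun z hz => ⟨F z, pair_mem_graphOf.2 ⟨hz, rfl⟩, fun w hw => (pair_mem_graphOf.1 hw).2⟩⟩

/-- From a Cardinal inequality to the ZF-coded `CardLE`. -/
theorem cardLE_of_mk_le {X Y : ZFSet} (h : Cardinal.mk X.toSet ≤ Cardinal.mk Y.toSet) :
    CardLE X Y := by
  rcases ZFSet.eq_empty_or_nonempty X with hX | ⟨x₀, hx₀⟩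
  · exact Or.inl hX
  obtain ⟨i⟩ := Cardinal.le_def _ _ |>.1 h
  classical
  set s : ZFSet → ZFSet := fun y =>
    if h : ∃ x : X.toSet, (i x : ZFSet) = y then (h.choose : ZFSet) else x₀ with hs
  have hsmem : ∀ y, s y ∈ X := by
    intro y
    rw [hs]; dsimp only
    split
    · next h => exact (h.choose).2
    · exact hx₀
  refine Or.inr ⟨graphOf Y s, graphOf_isFunc fun y _ => hsmem y, ?_⟩
  intro y hy
  refine ⟨(i ⟨y, hy⟩ : ZFSet), (i ⟨y, hy⟩).2, ?_⟩
  have : s (i ⟨y, hy⟩) = y := by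
    rw [hs]; dsimp only
    have hex : ∃ x : X.toSet, (i x : ZFSet) = (i ⟨y, hy⟩ : ZFSet) := ⟨⟨y, hy⟩, rfl⟩
    rw [dif_pos hex]
    have h2 : hex.choose = (⟨y, hy⟩ : X.toSet) := i.injective (Subtype.ext hex.choose_spec)
    rw [h2]
  exact pair_mem_graphOf.2 ⟨(i ⟨y, hy⟩).2, this.symm⟩

theorem mk_le_of_cardLE {X Y : ZFSet} (h : CardLE X Y) :
    Cardinal.mk X.toSet ≤ Cardinal.mk Y.toSet := by
  rcases h with rfl | ⟨f, hf, hsurj⟩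
  · simp [show (∅ : ZFSet).toSet = ∅ from ZFSet.coe_empty]
  classical
  have val : ∀ y : Y.toSet, ∃ w, ZFSet.pair y w ∈ f := fun y => (hf.2 y y.2).exists
  set s : Y.toSet → ZFSet := fun y => (val y).choose with hs
  have hmem : ∀ y : Y.toSet, s y ∈ X.toSet := by
    intro y
    have h1 := (val y).choose_spec
    exact (ZFSet.pair_mem_prod.1 (hf.1 h1)).2
  have hsurj' : Function.Surjective (fun y : Y.toSet => (⟨s y, hmem y⟩ : X.toSet)) := by
    rintro ⟨x, hx⟩
    obtain ⟨y, hy, hpair⟩ := hsurj x hx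
    refine ⟨⟨y, hy⟩, ?_⟩
    exact Subtype.ext ((hf.2 y hy).unique (val ⟨y, hy⟩).choose_spec hpair)
  exact Cardinal.mk_le_of_surjective hsurj'

theorem zf_prod_mono {η Y Y' : ZFSet} (h : Y ⊆ Y') : ZFSet.prod η Y ⊆ ZFSet.prod η Y' := by
  intro p hp
  obtain ⟨a, ha, b, hb, rfl⟩ := ZFSet.mem_prod.1 hp
  exact ZFSet.pair_mem_prod.2 ⟨ha, h hb⟩

section OrdFacts
variable {κ : ZFSet} (hOrd : IsOrd κ)

include hOrd in
theorem mem_kappa_of_mem {a b : ZFSet} (ha : a ∈ b) (hb : b ∈ κ) : a ∈ κ :=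
  hOrd.1 b hb ha

include hOrd in
theorem empty_mem_kappa (hne : κ.toSet.Nonempty) : ∅ ∈ κ := by
  obtain ⟨m, hm, hmin⟩ := ZFSet.mem_wf.has_min κ.toSet hne
  have : m = ∅ := by
    rw [ZFSet.eq_empty]
    intro y hy
    exact hmin y (mem_kappa_of_mem hOrd hy hm) hy
  exact this ▸ hm

include hOrd in
theorem empty_mem_of_ne {b : ZFSet} (hb : b ∈ κ) (hne : κ.toSet.Nonempty) (h : b ≠ ∅) :
    ∅ ∈ b := by
  rcases hOrd.2.1 ∅ (empty_mem_kappa hOrd hne) b hb with h1 | h1 | h1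
  · exact h1
  · exact absurd h1.symm h
  · exact absurd h1 (ZFSet.notMem_empty _)

include hOrd in
theorem mem_kappa_transitive {b : ZFSet} (hb : b ∈ κ) : b.IsTransitive := by
  intro y hy z hz
  exact hOrd.2.2 z (mem_kappa_of_mem hOrd hz (mem_kappa_of_mem hOrd hy hb)) y
    (mem_kappa_of_mem hOrd hy hb) b hb hz hy

variable (hInf : κ.toSet.Infinite)
  (hReg : ∀ α ∈ κ, ∀ f, ZFSet.IsFunc α κ f →
      ∃ β ∈ κ, ∀ x ∈ α, ∀ o, ZFSet.pair x o ∈ f → o ∈ β)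

include hOrd hInf hReg in
theorem no_max {lam : ZFSet} (hl : lam ∈ κ) : ∃ β ∈ κ, lam ∈ β := by
  have hx : ∃ x ∈ κ, x ≠ ∅ := by
    by_contra hcon
    push_neg at hcon
    apply hInf
    apply Set.Finite.subset (Set.finite_singleton (∅ : ZFSet))
    intro z hz
    simp [hcon z hz]
  obtain ⟨x, hxκ, hxne⟩ := hx
  obtain ⟨z₀, hz₀⟩ := ZFSet.eq_empty_or_nonempty x |>.resolve_left hxne
  obtain ⟨β, hβ, hbd⟩ := hReg x hxκ (graphOf x fun _ => lam)
    (graphOf_isFunc fun _ _ => hl)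
  exact ⟨β, hβ, hbd z₀ hz₀ lam (pair_mem_graphOf.2 ⟨hz₀, rfl⟩)⟩

include hOrd hInf hReg in
theorem bound2 {a b : ZFSet} (ha : a ∈ κ) (hb : b ∈ κ) : ∃ δ ∈ κ, a ∈ δ ∧ b ∈ δ := by
  rcases hOrd.2.1 a ha b hb with h | h | h
  · obtain ⟨δ, hδ, hbδ⟩ := no_max hOrd hInf hReg hb
    exact ⟨δ, hδ, hOrd.2.2 a ha b hb δ hδ h hbδ, hbδ⟩
  · obtain ⟨δ, hδ, hbδ⟩ := no_max hOrd hInf hReg hb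
    exact ⟨δ, hδ, h ▸ hbδ, hbδ⟩
  · obtain ⟨δ, hδ, haδ⟩ := no_max hOrd hInf hReg ha
    exact ⟨δ, hδ, haδ, hOrd.2.2 b hb a ha δ hδ h haδ⟩

variable {W : ZFSet} (hW : W.IsTransitive) (hWc : LtClosed κ W)

include hOrd hInf hWc in
theorem empty_mem_W : ∅ ∈ W := by
  refine hWc ∅ (empty_mem_kappa hOrd hInf.nonempty) ∅ ⟨ZFSet.empty_subset _, ?_⟩
  intro z hz
  exact absurd hz (ZFSet.notMem_empty _)

include hOrd hInf hReg hW hWc in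
theorem kappa_subset_W : κ ⊆ W := by
  intro x hx
  obtain ⟨η, hη, hxη⟩ := no_max hOrd hInf hReg hx
  have hf : graphOf η (fun _ => ∅) ∈ W :=
    hWc η hη _ (graphOf_isFunc fun _ _ => empty_mem_W hOrd hInf hWc)
  have hp : ZFSet.pair x ∅ ∈ W := hW _ hf (pair_mem_graphOf.2 ⟨hxη, rfl⟩)
  have hsx : ({x} : ZFSet) ∈ W := hW _ hp (by simp [ZFSet.pair, ZFSet.mem_pair])
  exact hW _ hsx (ZFSet.mem_singleton.2 rfl)

end OrdFacts

/-! ### Formula utilities -/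

/-- free-variable (over-)approximation -/
def fv : Fml → List ℕ
  | .mem i j => [i, j]
  | .equal i j => [i, j]
  | .not φ => fv φ
  | .and φ ψ => fv φ ++ fv ψ
  | .ex n φ => n :: fv φ

theorem sat_congr (D : ZFSet) :
    ∀ (φ : Fml) {v v' : ℕ → ZFSet}, (∀ m ∈ fv φ, v m = v' m) → (Sat D φ v ↔ Sat D φ v') := by
  intro φ
  induction φ with
  | mem i j => intro v v' h; simp only [Sat, fv] at *; rw [h i (by simp), h j (by simp)]
  | equal i j => intro v v' h; simp only [Sat, fv] at *; rw [h i (by simp), h j (by simp)]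
  | not φ ih => intro v v' h; simp only [Sat]; rw [ih h]
  | and φ ψ ih₁ ih₂ =>
    intro v v' h
    simp only [Sat]
    rw [ih₁ fun m hm => h m (by simp [fv, hm]), ih₂ fun m hm => h m (by simp [fv, hm])]
  | ex n φ ih =>
    intro v v' h
    simp only [Sat]
    constructor
    · rintro ⟨a, ha, hsat⟩
      refine ⟨a, ha, (ih ?_).1 hsat⟩
      intro m hm
      by_cases hmn : m = n
      · subst hmn; simp
      · simp only [Function.update_apply, if_neg hmn]
        exact h m (by simp [fv, hm])
    · rintro ⟨a, ha, hsat⟩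
      refine ⟨a, ha, (ih ?_).2 hsat⟩
      intro m hm
      by_cases hmn : m = n
      · subst hmn; simp
      · simp only [Function.update_apply, if_neg hmn]
        exact h m (by simp [fv, hm])

def encodeFml : Fml → ℕ
  | .mem i j => Nat.pair 0 (Nat.pair i j)
  | .equal i j => Nat.pair 1 (Nat.pair i j)
  | .not φ => Nat.pair 2 (encodeFml φ)
  | .and φ ψ => Nat.pair 3 (Nat.pair (encodeFml φ) (encodeFml ψ))
  | .ex n φ => Nat.pair 4 (Nat.pair n (encodeFml φ))

theorem encodeFml_inj : ∀ φ ψ : Fml, encodeFml φ = encodeFml ψ → φ = ψ := by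
  intro φ
  induction φ with
  | mem i j =>
    intro ψ h
    cases ψ <;> simp [encodeFml, Nat.pair_eq_pair] at h
    obtain ⟨rfl, rfl⟩ := h; rfl
  | equal i j =>
    intro ψ h
    cases ψ <;> simp [encodeFml, Nat.pair_eq_pair] at h
    obtain ⟨rfl, rfl⟩ := h; rfl
  | not φ ih =>
    intro ψ h
    cases ψ <;> simp [encodeFml, Nat.pair_eq_pair] at h
    rw [ih _ h]
  | and φ₁ φ₂ ih₁ ih₂ =>
    intro ψ h
    cases ψ <;> simp [encodeFml, Nat.pair_eq_pair] at h
    rw [ih₁ _ h.1, ih₂ _ h.2]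
  | ex n φ ih =>
    intro ψ h
    cases ψ <;> simp [encodeFml, Nat.pair_eq_pair] at h
    rw [h.1, ih _ h.2]

instance : Countable Fml := ⟨⟨encodeFml, fun a b => encodeFml_inj a b⟩⟩

/-- build a valuation from a list of variables and a list of values -/
def assemble : List ℕ → List ZFSet → ℕ → ZFSet
  | [], _, _ => ∅
  | _ :: _, [], _ => ∅
  | n :: ns, x :: xs, m => if m = n then x else assemble ns xs m

theorem assemble_map (v : ℕ → ZFSet) :
    ∀ ns : List ℕ, ∀ m ∈ ns, assemble ns (ns.map v) m = v m := by
  intro ns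
  induction ns with
  | nil => simp
  | cons n ns ih =>
    intro m hm
    simp only [List.map_cons, assemble]
    by_cases h : m = n
    · subst h; simp
    · rw [if_neg h]
      exact ih m (by rcases List.mem_cons.1 hm with h' | h'; exact absurd h' h; exact h')

theorem assemble_mem {Y : ZFSet} (hY : ∅ ∈ Y) :
    ∀ (ns : List ℕ) (xs : List ZFSet), (∀ x ∈ xs, x ∈ Y) → ∀ m, assemble ns xs m ∈ Y := by
  intro ns
  induction ns with
  | nil => intro xs _ m; simpa [assemble] using hY
  | cons n ns ih =>
    intro xs hxs m
    cases xs with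
    | nil => simpa [assemble] using hY
    | cons x xs =>
      simp only [assemble]
      by_cases h : m = n
      · rw [if_pos h]; exact hxs x List.mem_cons_self
      · rw [if_neg h]
        exact ih xs (fun y hy => hxs y (List.mem_cons_of_mem x hy)) m

/-! ### The Skolem/closure hierarchy -/

/-- canonical Skolem witness -/
noncomputable def wit (W : ZFSet) (φ : Fml) (n : ℕ) (v : ℕ → ZFSet) : ZFSet :=
  @dite ZFSet (∃ a, a ∈ W ∧ Sat W φ (Function.update v n a)) (Classical.propDecidable _)
    (fun h => h.choose) (fun _ => ∅)

theorem wit_mem_W {W : ZFSet} (hE : ∅ ∈ W) (φ : Fml) (n : ℕ) (v : ℕ → ZFSet) :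
    wit W φ n v ∈ W := by
  rw [wit]
  split
  · next h => exact h.choose_spec.1
  · exact hE

theorem wit_spec {W : ZFSet} {φ : Fml} {n : ℕ} {v : ℕ → ZFSet}
    (h : ∃ a, a ∈ W ∧ Sat W φ (Function.update v n a)) :
    wit W φ n v ∈ W ∧ Sat W φ (Function.update v n (wit W φ n v)) := by
  rw [wit, dif_pos h]
  exact h.choose_spec

/-- one closure step -/
noncomputable def step (κ W Y : ZFSet) : ZFSet :=
  ZFSet.sep (fun z => z ∈ Y ∨
    (∃ (φ : Fml) (n : ℕ) (L : List ZFSet), (∀ x ∈ L, x ∈ Y) ∧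
      z = wit W φ n (assemble (fv φ) L)) ∨
    (∃ η, η ∈ κ ∧ ZFSet.IsFunc η Y z)) W

/-- the cumulative hierarchy of hulls, indexed by ZF sets (used on ordinals below `κ`) -/
noncomputable def stage (κ W : ZFSet) : ZFSet → ZFSet :=
  ZFSet.mem_wf.fix fun α IH =>
    step κ W (κ ∪ ZFSet.sep (fun z => ∃ β, ∃ h : β ∈ α, z ∈ IH β h) W)

theorem stage_eq (κ W α : ZFSet) :
    stage κ W α =
      step κ W (κ ∪ ZFSet.sep (fun z => ∃ β, β ∈ α ∧ z ∈ stage κ W β) W) := by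
  have h := ZFSet.mem_wf.fix_eq
    (fun α (IH : ∀ β, β ∈ α → ZFSet) =>
      step κ W (κ ∪ ZFSet.sep (fun z => ∃ β, ∃ h : β ∈ α, z ∈ IH β h) W)) α
  rw [stage, h]
  simp only [exists_prop]

/-- the Skolem hull -/
noncomputable def bigX (κ W : ZFSet) : ZFSet :=
  ZFSet.sep (fun z => ∃ α, α ∈ κ ∧ z ∈ stage κ W α) W

theorem mem_bigX {κ W z : ZFSet} :
    z ∈ bigX κ W ↔ z ∈ W ∧ ∃ α, α ∈ κ ∧ z ∈ stage κ W α := ZFSet.mem_sep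

theorem step_subset_W {κ W Y : ZFSet} : step κ W Y ⊆ W :=
  fun _ hz => (ZFSet.mem_sep.1 hz).1

theorem stage_subset_W {κ W α : ZFSet} : stage κ W α ⊆ W := by
  rw [stage_eq]; exact step_subset_W

theorem bigX_subset_W {κ W : ZFSet} : bigX κ W ⊆ W :=
  fun _ hz => (ZFSet.mem_sep.1 hz).1

theorem subset_step {κ W Y : ZFSet} (hYW : Y ⊆ W) : Y ⊆ step κ W Y :=
  fun z hz => ZFSet.mem_sep.2 ⟨hYW hz, Or.inl hz⟩

theorem step_mono {κ W Y Y' : ZFSet} (h : Y ⊆ Y') : step κ W Y ⊆ step κ W Y' := by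
  intro z hz
  obtain ⟨hzW, hc⟩ := ZFSet.mem_sep.1 hz
  refine ZFSet.mem_sep.2 ⟨hzW, ?_⟩
  rcases hc with h1 | ⟨φ, n, L, hL, rfl⟩ | ⟨η, hη, hf⟩
  · exact Or.inl (h h1)
  · exact Or.inr (Or.inl ⟨φ, n, L, fun x hx => h (hL x hx), rfl⟩)
  · exact Or.inr (Or.inr ⟨η, hη, (hf.1.trans (zf_prod_mono h)), hf.2⟩)

theorem union_sep_subset_W {κ W α : ZFSet} (hκW : κ ⊆ W) :
    (κ ∪ ZFSet.sep (fun z => ∃ β, β ∈ α ∧ z ∈ stage κ W β) W) ⊆ W := by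
  intro z hz
  rcases ZFSet.mem_union.1 hz with h | h
  · exact hκW h
  · exact (ZFSet.mem_sep.1 h).1

theorem kappa_subset_stage {κ W α : ZFSet} (hκW : κ ⊆ W) : κ ⊆ stage κ W α := by
  rw [stage_eq]
  intro z hz
  exact subset_step (union_sep_subset_W hκW) (ZFSet.mem_union.2 (Or.inl hz))

theorem stage_mono {κ W α β : ZFSet} (hκW : κ ⊆ W) (hβα : β ∈ α) :
    stage κ W β ⊆ stage κ W α := by
  rw [stage_eq κ W α]
  intro z hz
  have hzW : z ∈ W := stage_subset_W hz
  exact subset_step (union_sep_subset_W hκW)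
    (ZFSet.mem_union.2 (Or.inr (ZFSet.mem_sep.2 ⟨hzW, β, hβα, hz⟩)))

theorem step_stage_subset {κ W α β : ZFSet} (hκW : κ ⊆ W) (hβα : β ∈ α) :
    step κ W (stage κ W β) ⊆ stage κ W α := by
  rw [stage_eq κ W α]
  apply step_mono
  intro z hz
  exact ZFSet.mem_union.2 (Or.inr (ZFSet.mem_sep.2 ⟨stage_subset_W hz, β, hβα, hz⟩))

section Hull

variable {κ W : ZFSet} (hOrd : IsOrd κ) (hInf : κ.toSet.Infinite)
  (hReg : ∀ α ∈ κ, ∀ f, ZFSet.IsFunc α κ f →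
      ∃ β ∈ κ, ∀ x ∈ α, ∀ o, ZFSet.pair x o ∈ f → o ∈ β)
  (hW : W.IsTransitive) (hWc : LtClosed κ W)

include hOrd hInf hReg hW hWc

theorem kappa_subset_bigX : κ ⊆ bigX κ W := by
  intro z hz
  exact mem_bigX.2 ⟨kappa_subset_W hOrd hInf hReg hW hWc hz,
    ∅, empty_mem_kappa hOrd hInf.nonempty,
    kappa_subset_stage (kappa_subset_W hOrd hInf hReg hW hWc) hz⟩

theorem listStage :
    ∀ L : List ZFSet, (∀ x ∈ L, x ∈ bigX κ W) → ∃ δ ∈ κ, ∀ x ∈ L, x ∈ stage κ W δ := by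
  have hκW := kappa_subset_W hOrd hInf hReg hW hWc
  intro L
  induction L with
  | nil => exact fun _ => ⟨∅, empty_mem_kappa hOrd hInf.nonempty, by simp⟩
  | cons x L ih =>
    intro h
    obtain ⟨δ₀, hδ₀, hL⟩ := ih fun b hb => h b (List.mem_cons_of_mem x hb)
    obtain ⟨hxW, α, hα, hxα⟩ := mem_bigX.1 (h x List.mem_cons_self)
    obtain ⟨δ, hδ, hαδ, hδ₀δ⟩ := bound2 hOrd hInf hReg hα hδ₀
    refine ⟨δ, hδ, ?_⟩
    intro b hb
    rcases List.mem_cons.1 hb with rfl | hb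
    · exact stage_mono hκW hαδ hxα
    · exact stage_mono hκW hδ₀δ (hL b hb)

theorem bigX_tv :
    ∀ (φ : Fml) (n : ℕ) (v : ℕ → ZFSet), (∀ m, v m ∈ bigX κ W) →
      (∃ a, a ∈ W ∧ Sat W φ (Function.update v n a)) →
      ∃ a, a ∈ bigX κ W ∧ Sat W φ (Function.update v n a) := by
  have hκW := kappa_subset_W hOrd hInf hReg hW hWc
  intro φ n v hv hEx
  set L : List ZFSet := (fv φ).map v with hLdef
  have hLX : ∀ x ∈ L, x ∈ bigX κ W := by
    intro x hx
    obtain ⟨m, _, rfl⟩ := List.mem_map.1 hx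
    exact hv m
  obtain ⟨δ, hδ, hLs⟩ := listStage hOrd hInf hReg hW hWc L hLX
  set v' : ℕ → ZFSet := assemble (fv φ) L with hv'def
  have hagree : ∀ m ∈ fv φ, v' m = v m := fun m hm => assemble_map v (fv φ) m hm
  have hupd : ∀ a, (Sat W φ (Function.update v n a) ↔ Sat W φ (Function.update v' n a)) := by
    intro a
    apply sat_congr
    intro m hm
    by_cases hmn : m = n
    · subst hmn; simp
    · simp only [Function.update_apply, if_neg hmn]
      exact (hagree m hm).symm
  have hEx' : ∃ a, a ∈ W ∧ Sat W φ (Function.update v' n a) := by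
    obtain ⟨a, haW, hsat⟩ := hEx
    exact ⟨a, haW, (hupd a).1 hsat⟩
  obtain ⟨hwW, hwSat⟩ := wit_spec hEx'
  set a := wit W φ n v' with hadef
  have hstep : a ∈ step κ W (stage κ W δ) :=
    ZFSet.mem_sep.2 ⟨hwW, Or.inr (Or.inl ⟨φ, n, L, fun x hx => hLs x hx, rfl⟩)⟩
  obtain ⟨δ', hδ', hδδ'⟩ := no_max hOrd hInf hReg hδ
  have haX : a ∈ bigX κ W :=
    mem_bigX.2 ⟨hwW, δ', hδ', step_stage_subset hκW hδδ' hstep⟩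
  exact ⟨a, haX, (hupd a).2 hwSat⟩

theorem ltClosed_bigX : LtClosed κ (bigX κ W) := by
  classical
  have hκW := kappa_subset_W hOrd hInf hReg hW hWc
  intro η hη f hf
  -- stage-selecting function
  set G : ZFSet → ZFSet := fun x =>
    if h : ∃ α, α ∈ κ ∧ ∃ y, ZFSet.pair x y ∈ f ∧ y ∈ stage κ W α then h.choose else ∅
    with hGdef
  have hGspec : ∀ x ∈ η, G x ∈ κ ∧ ∃ y, ZFSet.pair x y ∈ f ∧ y ∈ stage κ W (G x) := by
    intro x hx
    obtain ⟨y, hy⟩ := (hf.2 x hx).exists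
    have hyX : y ∈ bigX κ W := (ZFSet.pair_mem_prod.1 (hf.1 hy)).2
    obtain ⟨_, α, hα, hyα⟩ := mem_bigX.1 hyX
    have hex : ∃ α, α ∈ κ ∧ ∃ y, ZFSet.pair x y ∈ f ∧ y ∈ stage κ W α := ⟨α, hα, y, hy, hyα⟩
    rw [hGdef]; dsimp only; rw [dif_pos hex]
    exact hex.choose_spec
  obtain ⟨β, hβ, hbd⟩ := hReg η hη (graphOf η G) (graphOf_isFunc fun x hx => (hGspec x hx).1)
  have hval : ∀ x ∈ η, ∀ w, ZFSet.pair x w ∈ f → w ∈ stage κ W β := by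
    intro x hx w hw
    obtain ⟨hGκ, y, hy, hys⟩ := hGspec x hx
    have : w = y := by
      have hu := hf.2 x hx
      exact hu.unique hw hy
    subst this
    have hGβ : G x ∈ β := hbd x hx (G x) (pair_mem_graphOf.2 ⟨hx, rfl⟩)
    exact stage_mono hκW hGβ hys
  have hfs : ZFSet.IsFunc η (stage κ W β) f := by
    refine ⟨?_, hf.2⟩
    intro p hp
    obtain ⟨x, hx, y, hy, rfl⟩ := ZFSet.mem_prod.1 (hf.1 hp)
    exact ZFSet.pair_mem_prod.2 ⟨hx, hval x hx y hp⟩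
  have hfW : f ∈ W := by
    refine hWc η hη f ⟨?_, hf.2⟩
    exact hf.1.trans (zf_prod_mono bigX_subset_W)
  have hstep : f ∈ step κ W (stage κ W β) :=
    ZFSet.mem_sep.2 ⟨hfW, Or.inr (Or.inr ⟨η, hη, hfs⟩)⟩
  obtain ⟨β', hβ', hββ'⟩ := no_max hOrd hInf hReg hβ
  exact mem_bigX.2 ⟨hfW, β', hβ', step_stage_subset hκW hββ' hstep⟩

end Hull

/-- Tarski–Vaught test -/
theorem tarski_vaught {X W : ZFSet} (hXW : X ⊆ W)
    (h : ∀ (φ : Fml) (n : ℕ) (v : ℕ → ZFSet), (∀ m, v m ∈ X) →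
      (∃ a, a ∈ W ∧ Sat W φ (Function.update v n a)) →
      ∃ a, a ∈ X ∧ Sat W φ (Function.update v n a)) :
    ∀ (φ : Fml) (v : ℕ → ZFSet), (∀ m, v m ∈ X) → (Sat X φ v ↔ Sat W φ v) := by
  intro φ
  induction φ with
  | mem i j => intro v _; simp [Sat]
  | equal i j => intro v _; simp [Sat]
  | not φ ih => intro v hv; simp only [Sat]; rw [ih v hv]
  | and φ ψ ih₁ ih₂ => intro v hv; simp only [Sat]; rw [ih₁ v hv, ih₂ v hv]
  | ex n φ ih =>
    intro v hv
    simp only [Sat]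
    constructor
    · rintro ⟨a, haX, hs⟩
      have hv' : ∀ m, Function.update v n a m ∈ X := by
        intro m
        by_cases hmn : m = n
        · subst hmn; simp [haX]
        · simp only [Function.update_apply, if_neg hmn]; exact hv m
      exact ⟨a, hXW haX, (ih _ hv').1 hs⟩
    · rintro ⟨a, haW, hs⟩
      obtain ⟨b, hbX, hbs⟩ := h φ n v hv ⟨a, haW, hs⟩
      have hv' : ∀ m, Function.update v n b m ∈ X := by
        intro m
        by_cases hmn : m = n
        · subst hmn; simp [hbX]
        · simp only [Function.update_apply, if_neg hmn]; exact hv m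
      exact ⟨b, hbX, (ih _ hv').2 hbs⟩

end Stmt8Aux


/-! ### Cardinality bounds -/

/-- set of coded short sequences with values in `Y` -/
def SeqSet (κ Y : ZFSet) : Set ZFSet := {f | ∃ η, η ∈ κ ∧ ZFSet.IsFunc η Y f}

/-- set of canonical Skolem witnesses over `Y` -/
def WitSet (W Y : ZFSet) : Set ZFSet :=
  {z | ∃ (φ : Fml) (n : ℕ) (L : List ZFSet), (∀ x ∈ L, x ∈ Y) ∧
    z = wit W φ n (assemble (fv φ) L)}

section Card

open Cardinal

universe u

variable {κ W : ZFSet.{u}} (hOrd : IsOrd κ) (hInf : κ.toSet.Infinite)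
  (hReg : ∀ α ∈ κ, ∀ f, ZFSet.IsFunc α κ f →
      ∃ β ∈ κ, ∀ x ∈ α, ∀ o, ZFSet.pair x o ∈ f → o ∈ β)
  (hPow : ∀ α β : ZFSet.{u}, α ∈ β → β ∈ κ → CardLE (ZFSet.funs β α) κ)

include hInf in
theorem aleph0_le_mk_kappa : ℵ₀ ≤ #κ.toSet :=
  Cardinal.infinite_iff.1 (Set.infinite_coe_iff.2 hInf)

include hOrd hInf hReg hPow in
theorem mk_funs_le {η β : ZFSet.{u}} (hη : η ∈ κ) (hβ : β ∈ κ) :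
    #(ZFSet.funs η β).toSet ≤ #κ.toSet := by
  classical
  obtain ⟨δ, hδ, hηδ, hβδ⟩ := bound2 hOrd hInf hReg hη hβ
  obtain ⟨δ', hδ', hδδ'⟩ := no_max hOrd hInf hReg hδ
  have hbase : #(ZFSet.funs δ' δ).toSet ≤ #κ.toSet := mk_le_of_cardLE (hPow δ δ' hδδ' hδ')
  have hηδ' : η ∈ δ' := hOrd.2.2 η hη δ hδ δ' hδ' hηδ hδδ'
  have hηsub : η ⊆ δ' := mem_kappa_transitive hOrd hδ' η hηδ'
  have hβsub : β ⊆ δ := mem_kappa_transitive hOrd hδ β hβδ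
  have hδne : δ ≠ ∅ := fun h => ZFSet.notMem_empty η (h ▸ hηδ)
  have hEδ : ∅ ∈ δ := empty_mem_of_ne hOrd hδ hInf.nonempty hδne
  set pad : ZFSet := ZFSet.sep (fun p => ∃ x, x ∈ δ' ∧ x ∉ η ∧ p = ZFSet.pair x ∅)
    (ZFSet.prod δ' δ) with hpad
  have hprodsub : ZFSet.prod η β ⊆ ZFSet.prod δ' δ := by
    intro p hp
    obtain ⟨a, ha, b, hb, rfl⟩ := ZFSet.mem_prod.1 hp
    exact ZFSet.pair_mem_prod.2 ⟨hηsub ha, hβsub hb⟩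
  have hEfun : ∀ f, ZFSet.IsFunc η β f → ZFSet.IsFunc δ' δ (f ∪ pad) := by
    intro f hf
    constructor
    · intro p hp
      rcases ZFSet.mem_union.1 hp with h | h
      · exact hprodsub (hf.1 h)
      · exact (ZFSet.mem_sep.1 h).1
    · intro x hx
      by_cases hxη : x ∈ η
      · obtain ⟨w, hw, huniq⟩ := hf.2 x hxη
        refine ⟨w, ZFSet.mem_union.2 (Or.inl hw), ?_⟩
        intro y hy
        rcases ZFSet.mem_union.1 hy with h | h
        · exact huniq y h
        · obtain ⟨-, x₂, -, hx₂η, hpe⟩ := ZFSet.mem_sep.1 h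
          obtain ⟨rfl, rfl⟩ := ZFSet.pair_injective hpe
          exact absurd hxη hx₂η
      · refine ⟨∅, ZFSet.mem_union.2 (Or.inr (ZFSet.mem_sep.2
          ⟨ZFSet.pair_mem_prod.2 ⟨hx, hEδ⟩, x, hx, hxη, rfl⟩)), ?_⟩
        intro y hy
        rcases ZFSet.mem_union.1 hy with h | h
        · exact absurd (ZFSet.pair_mem_prod.1 (hf.1 h)).1 hxη
        · obtain ⟨-, x₂, -, -, hpe⟩ := ZFSet.mem_sep.1 h
          obtain ⟨rfl, rfl⟩ := ZFSet.pair_injective hpe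
          rfl
  have hkey : ∀ f g : ZFSet, ZFSet.IsFunc η β f → f ∪ pad = g ∪ pad → f ⊆ g := by
    intro f g hf he p hp
    have hp2 : p ∈ g ∪ pad := he ▸ ZFSet.mem_union.2 (Or.inl hp)
    rcases ZFSet.mem_union.1 hp2 with h | h
    · exact h
    · obtain ⟨a, ha, b, hb, rfl⟩ := ZFSet.mem_prod.1 (hf.1 hp)
      obtain ⟨-, x₂, -, hx₂η, hpe⟩ := ZFSet.mem_sep.1 h
      obtain ⟨rfl, rfl⟩ := ZFSet.pair_injective hpe
      exact absurd ha hx₂η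
  have hemb : (ZFSet.funs η β).toSet ↪ (ZFSet.funs δ' δ).toSet := by
    refine ⟨fun f => ⟨f.1 ∪ pad, ZFSet.mem_funs.2 (hEfun f.1 (ZFSet.mem_funs.1 f.2))⟩, ?_⟩
    intro f g he
    have he' : f.1 ∪ pad = g.1 ∪ pad := congrArg Subtype.val he
    apply Subtype.ext
    apply ZFSet.ext
    intro p
    exact ⟨fun hp => hkey f.1 g.1 (ZFSet.mem_funs.1 f.2) he' hp,
      fun hp => hkey g.1 f.1 (ZFSet.mem_funs.1 g.2) he'.symm hp⟩
  exact ((Cardinal.le_def _ _).2 ⟨hemb⟩).trans hbase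

include hOrd hInf hReg hPow in
theorem mk_funs_kappa_le {η : ZFSet.{u}} (hη : η ∈ κ) :
    #(ZFSet.funs η κ).toSet ≤ #κ.toSet := by
  have hsub : (ZFSet.funs η κ).toSet ⊆
      ⋃ (β : κ.toSet), (ZFSet.funs η (β : ZFSet)).toSet := by
    intro f hf
    have hf' : ZFSet.IsFunc η κ f := ZFSet.mem_funs.1 hf
    obtain ⟨β, hβ, hbd⟩ := hReg η hη f hf'
    refine Set.mem_iUnion.2 ⟨⟨β, hβ⟩, ?_⟩
    refine ZFSet.mem_funs.2 ⟨?_, hf'.2⟩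
    intro p hp
    obtain ⟨a, ha, b, hb, rfl⟩ := ZFSet.mem_prod.1 (hf'.1 hp)
    exact ZFSet.pair_mem_prod.2 ⟨ha, hbd a ha b hp⟩
  calc #(ZFSet.funs η κ).toSet
      ≤ #(⋃ (β : κ.toSet), (ZFSet.funs η (β : ZFSet)).toSet) :=
        Cardinal.mk_le_mk_of_subset hsub
    _ ≤ Cardinal.sum (fun β : κ.toSet => #(ZFSet.funs η (β : ZFSet)).toSet) :=
        Cardinal.mk_iUnion_le_sum_mk
    _ ≤ Cardinal.sum (fun _ : κ.toSet => #κ.toSet) :=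
        Cardinal.sum_le_sum _ _ (fun β => mk_funs_le hOrd hInf hReg hPow hη β.2)
    _ = #κ.toSet * #κ.toSet := Cardinal.sum_const' _ _
    _ = #κ.toSet := Cardinal.mul_eq_self (aleph0_le_mk_kappa hInf)

include hOrd hInf hReg hPow in
theorem mk_seqSet_le {Y : ZFSet.{u}} (hY : #Y.toSet ≤ #κ.toSet) :
    #(SeqSet κ Y) ≤ #κ.toSet := by
  classical
  obtain ⟨j⟩ := (Cardinal.le_def _ _).1 hY
  have hεκ : ∅ ∈ κ := empty_mem_kappa hOrd hInf.nonempty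
  have hperη : ∀ η : ZFSet.{u}, η ∈ κ →
      #({f : ZFSet.{u} | ZFSet.IsFunc η Y f}) ≤ #κ.toSet := by
    intro η hη
    set FV : ZFSet → ZFSet → ZFSet := fun f x =>
      if h : ∃ y, ZFSet.pair x y ∈ f ∧ y ∈ Y then (j ⟨h.choose, h.choose_spec.2⟩ : ZFSet)
      else ∅ with hFV
    have hFVκ : ∀ f x, FV f x ∈ κ := by
      intro f x
      rw [hFV]; dsimp only
      split
      · next h => exact (j ⟨h.choose, h.choose_spec.2⟩).2
      · exact hεκ
    have hclaim : ∀ f, ZFSet.IsFunc η Y f → ∀ x, x ∈ η → ∀ y, ZFSet.pair x y ∈ f →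
        ∀ hyY : y ∈ Y.toSet, FV f x = (j ⟨y, hyY⟩ : ZFSet) := by
      intro f hf x hx y hy hyY
      have hex : ∃ y', ZFSet.pair x y' ∈ f ∧ y' ∈ Y := ⟨y, hy, hyY⟩
      rw [hFV]; dsimp only; rw [dif_pos hex]
      have : hex.choose = y := (hf.2 x hx).unique hex.choose_spec.1 hy
      exact congrArg _ (congrArg j (Subtype.ext this))
    have hkey : ∀ f g : ZFSet, ZFSet.IsFunc η Y f → ZFSet.IsFunc η Y g →
        (∀ x ∈ η, FV f x = FV g x) → f ⊆ g := by
      intro f g hf hg hFVeq p hp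
      obtain ⟨x, hx, y, hy, rfl⟩ := ZFSet.mem_prod.1 (hf.1 hp)
      obtain ⟨w, hw⟩ := (hg.2 x hx).exists
      have hwY : w ∈ Y.toSet := (ZFSet.pair_mem_prod.1 (hg.1 hw)).2
      have h1 : FV f x = (j ⟨y, hy⟩ : ZFSet) := hclaim f hf x hx y hp hy
      have h2 : FV g x = (j ⟨w, hwY⟩ : ZFSet) := hclaim g hg x hx w hw hwY
      have h3 : (j ⟨y, hy⟩ : ZFSet) = (j ⟨w, hwY⟩ : ZFSet) := by
        rw [← h1, ← h2, hFVeq x hx]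
      have h4 : y = w := congrArg Subtype.val (j.injective (Subtype.coe_injective h3))
      rw [h4]
      exact hw
    have hemb : ({f : ZFSet.{u} | ZFSet.IsFunc η Y f}) ↪ (ZFSet.funs η κ).toSet := by
      refine ⟨fun f => ⟨graphOf η (FV f.1),
        ZFSet.mem_funs.2 (graphOf_isFunc fun x _ => hFVκ f.1 x)⟩, ?_⟩
      intro f g he
      have he' : graphOf η (FV f.1) = graphOf η (FV g.1) := congrArg Subtype.val he
      have hFVeq : ∀ x ∈ η, FV f.1 x = FV g.1 x := by
        intro x hx
        have h1 : ZFSet.pair x (FV f.1 x) ∈ graphOf η (FV f.1) :=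
          pair_mem_graphOf.2 ⟨hx, rfl⟩
        rw [he'] at h1
        exact (pair_mem_graphOf.1 h1).2
      apply Subtype.ext
      apply ZFSet.ext
      intro p
      exact ⟨fun hp => hkey f.1 g.1 f.2 g.2 hFVeq hp,
        fun hp => hkey g.1 f.1 g.2 f.2 (fun x hx => (hFVeq x hx).symm) hp⟩
    exact ((Cardinal.le_def _ _).2 ⟨hemb⟩).trans (mk_funs_kappa_le hOrd hInf hReg hPow hη)
  have hsub : SeqSet κ Y ⊆ ⋃ (η : κ.toSet), {f : ZFSet.{u} | ZFSet.IsFunc (η : ZFSet) Y f} := by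
    rintro f ⟨η, hη, hf⟩
    exact Set.mem_iUnion.2 ⟨⟨η, hη⟩, hf⟩
  calc #(SeqSet κ Y)
      ≤ #(⋃ (η : κ.toSet), {f : ZFSet.{u} | ZFSet.IsFunc (η : ZFSet) Y f}) :=
        Cardinal.mk_le_mk_of_subset hsub
    _ ≤ Cardinal.sum (fun η : κ.toSet => #({f : ZFSet.{u} | ZFSet.IsFunc (η : ZFSet) Y f})) :=
        Cardinal.mk_iUnion_le_sum_mk
    _ ≤ Cardinal.sum (fun _ : κ.toSet => #κ.toSet) :=
        Cardinal.sum_le_sum _ _ (fun η => hperη η η.2)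
    _ = #κ.toSet * #κ.toSet := Cardinal.sum_const' _ _
    _ = #κ.toSet := Cardinal.mul_eq_self (aleph0_le_mk_kappa hInf)

include hInf in
theorem mk_witSet_le {Y : ZFSet.{u}} (hY : #Y.toSet ≤ #κ.toSet) :
    #(WitSet W Y) ≤ #κ.toSet := by
  classical
  set σ : ULift.{u+1} (Fml × ℕ) × List Y.toSet → ZFSet.{u} := fun p =>
    wit W p.1.down.1 p.1.down.2 (assemble (fv p.1.down.1) (p.2.map Subtype.val)) with hσ
  have hsub : WitSet W Y ⊆ Set.range σ := by
    rintro z ⟨φ, n, L, hL, rfl⟩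
    refine ⟨⟨ULift.up (φ, n), L.attach.map fun x => ⟨x.1, hL x.1 x.2⟩⟩, ?_⟩
    rw [hσ]; dsimp only
    have : (L.attach.map fun x : {x // x ∈ L} => (⟨x.1, hL x.1 x.2⟩ : Y.toSet)).map
        Subtype.val = L := by
      rw [List.map_map]
      exact List.attach_map_subtype_val L
    rw [this]
  have h1 : #(WitSet W Y) ≤ #(ULift.{u+1} (Fml × ℕ) × List Y.toSet) :=
    (Cardinal.mk_le_mk_of_subset hsub).trans Cardinal.mk_range_le
  have h2 : #(ULift.{u+1} (Fml × ℕ) × List Y.toSet) =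
      #(ULift.{u+1} (Fml × ℕ)) * #(List Y.toSet) := by
    simp [Cardinal.mk_prod]
  have h3 : #(ULift.{u+1} (Fml × ℕ)) ≤ ℵ₀ := Cardinal.mk_le_aleph0
  have h4 : #(List Y.toSet) ≤ max ℵ₀ #Y.toSet := Cardinal.mk_list_le_max _
  have h5 : #(List Y.toSet) ≤ #κ.toSet :=
    h4.trans (max_le (aleph0_le_mk_kappa hInf) hY)
  calc #(WitSet W Y) ≤ #(ULift.{u+1} (Fml × ℕ)) * #(List Y.toSet) := h2 ▸ h1
    _ ≤ #κ.toSet * #κ.toSet :=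
        mul_le_mul' (h3.trans (aleph0_le_mk_kappa hInf)) h5
    _ = #κ.toSet := Cardinal.mul_eq_self (aleph0_le_mk_kappa hInf)

include hOrd hInf hReg hPow in
theorem mk_step_le {Y : ZFSet.{u}} (hY : #Y.toSet ≤ #κ.toSet) :
    #(step κ W Y).toSet ≤ #κ.toSet := by
  have hsub : (step κ W Y).toSet ⊆ Y.toSet ∪ (WitSet W Y ∪ SeqSet κ Y) := by
    intro z hz
    obtain ⟨-, hc⟩ := ZFSet.mem_sep.1 hz
    rcases hc with h | h | h
    · exact Or.inl h
    · exact Or.inr (Or.inl h)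
    · exact Or.inr (Or.inr h)
  have hκ := aleph0_le_mk_kappa (κ := κ) hInf
  calc #(step κ W Y).toSet ≤ #(Y.toSet ∪ (WitSet W Y ∪ SeqSet κ Y) : Set ZFSet) :=
        Cardinal.mk_le_mk_of_subset hsub
    _ ≤ #Y.toSet + #(WitSet W Y ∪ SeqSet κ Y : Set ZFSet) := Cardinal.mk_union_le _ _
    _ ≤ #Y.toSet + (#(WitSet W Y) + #(SeqSet κ Y)) :=
        add_le_add le_rfl (Cardinal.mk_union_le _ _)
    _ ≤ #κ.toSet + (#κ.toSet + #κ.toSet) :=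
        add_le_add hY (add_le_add (mk_witSet_le hInf hY) (mk_seqSet_le hOrd hInf hReg hPow hY))
    _ = #κ.toSet := by rw [Cardinal.add_eq_self hκ, Cardinal.add_eq_self hκ]

variable (hW : W.IsTransitive) (hWc : LtClosed κ W)

include hOrd hInf hReg hPow hW hWc in
theorem mk_stage_le : ∀ α : ZFSet.{u}, α ∈ κ → #(stage κ W α).toSet ≤ #κ.toSet := by
  have hκW := kappa_subset_W hOrd hInf hReg hW hWc
  have hκ := aleph0_le_mk_kappa (κ := κ) hInf
  intro α
  refine ZFSet.mem_wf.induction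
    (C := fun α => α ∈ κ → #(stage κ W α).toSet ≤ #κ.toSet) α ?_
  intro α IH hα
  rw [stage_eq]
  apply mk_step_le hOrd hInf hReg hPow
  have hUsub : (ZFSet.sep (fun z => ∃ β, β ∈ α ∧ z ∈ stage κ W β) W).toSet ⊆
      ⋃ (β : α.toSet), (stage κ W (β : ZFSet)).toSet := by
    intro z hz
    obtain ⟨-, β, hβ, hzβ⟩ := ZFSet.mem_sep.1 hz
    exact Set.mem_iUnion.2 ⟨⟨β, hβ⟩, hzβ⟩
  have hαele : #α.toSet ≤ #κ.toSet :=
    Cardinal.mk_le_mk_of_subset (fun z hz => hOrd.1 α hα hz)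
  have hU : #(ZFSet.sep (fun z => ∃ β, β ∈ α ∧ z ∈ stage κ W β) W).toSet ≤ #κ.toSet := by
    calc #(ZFSet.sep (fun z => ∃ β, β ∈ α ∧ z ∈ stage κ W β) W).toSet
        ≤ #(⋃ (β : α.toSet), (stage κ W (β : ZFSet)).toSet) :=
          Cardinal.mk_le_mk_of_subset hUsub
      _ ≤ Cardinal.sum (fun β : α.toSet => #(stage κ W (β : ZFSet)).toSet) :=
          Cardinal.mk_iUnion_le_sum_mk
      _ ≤ Cardinal.sum (fun _ : α.toSet => #κ.toSet) :=
          Cardinal.sum_le_sum _ _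
            (fun β => IH β β.2 (mem_kappa_of_mem hOrd β.2 hα))
      _ = #α.toSet * #κ.toSet := Cardinal.sum_const' _ _
      _ ≤ #κ.toSet * #κ.toSet := mul_le_mul' hαele le_rfl
      _ = #κ.toSet := Cardinal.mul_eq_self hκ
  calc #(κ ∪ ZFSet.sep (fun z => ∃ β, β ∈ α ∧ z ∈ stage κ W β) W).toSet
      = #(κ.toSet ∪ (ZFSet.sep (fun z => ∃ β, β ∈ α ∧ z ∈ stage κ W β) W).toSet : Set ZFSet) :=
        by exact congrArg (fun s : Set ZFSet => #s) (ZFSet.coe_union _ _)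
    _ ≤ #κ.toSet + #(ZFSet.sep (fun z => ∃ β, β ∈ α ∧ z ∈ stage κ W β) W).toSet :=
        Cardinal.mk_union_le _ _
    _ ≤ #κ.toSet + #κ.toSet := add_le_add le_rfl hU
    _ = #κ.toSet := Cardinal.add_eq_self hκ

include hOrd hInf hReg hPow hW hWc in
theorem mk_bigX_le : #(bigX κ W).toSet ≤ #κ.toSet := by
  have hκ := aleph0_le_mk_kappa (κ := κ) hInf
  have hsub : (bigX κ W).toSet ⊆ ⋃ (α : κ.toSet), (stage κ W (α : ZFSet)).toSet := by
    intro z hz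
    obtain ⟨-, α, hα, hzα⟩ := mem_bigX.1 hz
    exact Set.mem_iUnion.2 ⟨⟨α, hα⟩, hzα⟩
  calc #(bigX κ W).toSet
      ≤ #(⋃ (α : κ.toSet), (stage κ W (α : ZFSet)).toSet) :=
        Cardinal.mk_le_mk_of_subset hsub
    _ ≤ Cardinal.sum (fun α : κ.toSet => #(stage κ W (α : ZFSet)).toSet) :=
        Cardinal.mk_iUnion_le_sum_mk
    _ ≤ Cardinal.sum (fun _ : κ.toSet => #κ.toSet) :=
        Cardinal.sum_le_sum _ _
          (fun α => mk_stage_le hOrd hInf hReg hPow hW hWc α α.2)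
    _ = #κ.toSet * #κ.toSet := Cardinal.sum_const' _ _
    _ = #κ.toSet := Cardinal.mul_eq_self hκ

end Card

/-! ## Statement 8 -/

theorem stmt8 (κ : ZFSet) (hOrd : IsOrd κ) (hInf : κ.toSet.Infinite)
    (hReg : ∀ α ∈ κ, ∀ f, ZFSet.IsFunc α κ f →
      ∃ β ∈ κ, ∀ x ∈ α, ∀ o, ZFSet.pair x o ∈ f → o ∈ β)
    (hPow : ∀ α β : ZFSet, α ∈ β → β ∈ κ → CardLE (ZFSet.funs β α) κ)
    (W : ZFSet) (hW : W.IsTransitive) (hWc : LtClosed κ W)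
    (A : ZFSet) (hA : A ⊆ κ) :
    ∃ X : ZFSet, X ⊆ W ∧ ElemSub X W ∧ A ⊆ X ∧ CardLE X κ ∧ LtClosed κ X := by
  refine ⟨bigX κ W, bigX_subset_W, ⟨bigX_subset_W, ?_⟩, ?_, ?_, ?_⟩
  · exact tarski_vaught bigX_subset_W
      (fun φ n v hv hEx => bigX_tv hOrd hInf hReg hW hWc φ n v hv hEx)
  · exact fun z hz => kappa_subset_bigX hOrd hInf hReg hW hWc (hA hz)
  · exact cardLE_of_mk_le (mk_bigX_le hOrd hInf hReg hPow hW hWc)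
  · exact ltClosed_bigX hOrd hInf hReg hW hWc

end NairianModels
end
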